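/- arXiv:2311.03070 — 5 statements merged into one kernel-verified Lean document; each statement's English description precedes it below -/
import Mathlib

section
/- Let C^d(r,h) be the spherical cap of height h of the Euclidean ball of radius r in ℝ^d, i.e. C^d(r,h) = {(y,z) ∈ ℝ^{d-1} × ℝ : ‖y‖² + z² ≤ r², r - h ≤ z ≤ r}. Then for all 0 < h < 2r/d, the Lebesgue volume satisfies (a_d/2) · r^{(d-1)/2} · h^{(d+1)/2} < Vol_d(C^d(r,h)) < a_d · r^{(d-1)/2} · h^{(d+1)/2}, where a_d = (2π)^{(d-1)/2} / Γ((d+1)/2 + 1). -/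
open MeasureTheory Real Set

lemma sqrt_pow_eq {x : ℝ} (hx : 0 ≤ x) (n : ℕ) : Real.sqrt x ^ n = x ^ ((n:ℝ)/2) := by
  rw [Real.sqrt_eq_rpow, ← Real.rpow_natCast (x ^ (1/2:ℝ)) n, ← Real.rpow_mul hx]
  ring_nf

lemma capK_pos (n : ℕ) : 0 < Real.sqrt π ^ n / Real.Gamma ((n:ℝ) / 2 + 1) := by
  apply div_pos (pow_pos (Real.sqrt_pos.2 Real.pi_pos) n)
  apply Real.Gamma_pos_of_pos; positivity

lemma cap_vol_eq (n : ℕ) (hn : 0 < n) (r h : ℝ) (hr : 0 < r) (h0 : 0 < h) (hhr : h ≤ r) :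
    (volume {p : EuclideanSpace ℝ (Fin n) × ℝ |
        ‖p.1‖ ^ 2 + p.2 ^ 2 ≤ r ^ 2 ∧ r - h ≤ p.2 ∧ p.2 ≤ r}).toReal
    = ∫ z in (r-h)..r, (Real.sqrt π ^ n / Real.Gamma ((n:ℝ) / 2 + 1)) *
        Real.sqrt (r^2 - z^2) ^ n := by
  haveI : Nonempty (Fin n) := Fin.pos_iff_nonempty.mp hn
  set K : ℝ := Real.sqrt π ^ n / Real.Gamma ((n:ℝ) / 2 + 1) with hK
  have hKpos : 0 < K := capK_pos n
  set S : Set (EuclideanSpace ℝ (Fin n) × ℝ) :=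
    {p | ‖p.1‖ ^ 2 + p.2 ^ 2 ≤ r ^ 2 ∧ r - h ≤ p.2 ∧ p.2 ≤ r} with hS
  have hSm : MeasurableSet S := by
    have : S = {p : EuclideanSpace ℝ (Fin n) × ℝ | ‖p.1‖ ^ 2 + p.2 ^ 2 ≤ r ^ 2}
        ∩ {p | r - h ≤ p.2} ∩ {p | p.2 ≤ r} := by
      ext p; simp [hS, and_assoc]
    rw [this]
    refine (MeasurableSet.inter (measurableSet_le (by fun_prop) measurable_const) ?_).inter
      (measurableSet_le (by fun_prop) measurable_const)
    exact measurableSet_le measurable_const (by fun_prop)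
  have key : ∀ z : ℝ, volume ((fun y : EuclideanSpace ℝ (Fin n) => (y, z)) ⁻¹' S)
      = Set.indicator (Icc (r-h) r) (fun z => ENNReal.ofReal (K * Real.sqrt (r^2 - z^2) ^ n)) z := by
    intro z
    by_cases hz : z ∈ Icc (r-h) r
    · have hz2 : 0 ≤ r^2 - z^2 := by
        obtain ⟨hz1, hz2⟩ := hz
        nlinarith [hz1, hz2]
      have hpre : ((fun y : EuclideanSpace ℝ (Fin n) => (y, z)) ⁻¹' S)
          = Metric.closedBall (0 : EuclideanSpace ℝ (Fin n)) (Real.sqrt (r^2 - z^2)) := by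
        ext y
        simp only [hS, Set.mem_preimage, Set.mem_setOf_eq, Metric.mem_closedBall,
          dist_zero_right]
        constructor
        · rintro ⟨h1, -, -⟩
          rw [show Real.sqrt (r^2 - z^2) = Real.sqrt (r^2 - z^2) from rfl]
          have : ‖y‖^2 ≤ r^2 - z^2 := by linarith
          calc ‖y‖ = Real.sqrt (‖y‖^2) := (Real.sqrt_sq (norm_nonneg y)).symm
            _ ≤ Real.sqrt (r^2 - z^2) := Real.sqrt_le_sqrt this
        · intro hy
          refine ⟨?_, hz.1, hz.2⟩
          have : ‖y‖^2 ≤ r^2 - z^2 := by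
            calc ‖y‖^2 ≤ Real.sqrt (r^2 - z^2)^2 := by
                  exact pow_le_pow_left₀ (norm_nonneg y) hy 2
              _ = r^2 - z^2 := Real.sq_sqrt hz2
          linarith
      rw [hpre, Set.indicator_of_mem hz, EuclideanSpace.volume_closedBall]
      rw [ENNReal.ofReal_mul (by positivity), hK]
      rw [← ENNReal.ofReal_pow (Real.sqrt_nonneg _), Fintype.card_fin, mul_comm]
    · rw [Set.indicator_of_notMem hz]
      have : ((fun y : EuclideanSpace ℝ (Fin n) => (y, z)) ⁻¹' S) = ∅ := by
        ext y
        simp only [hS, Set.mem_preimage, Set.mem_setOf_eq, Set.mem_empty_iff_false, iff_false]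
        rintro ⟨-, h1, h2⟩
        exact hz ⟨h1, h2⟩
      rw [this, measure_empty]
  rw [Measure.volume_eq_prod, Measure.prod_apply_symm hSm]
  simp_rw [key]
  rw [lintegral_indicator measurableSet_Icc]
  have hcont : Continuous (fun z => K * Real.sqrt (r^2 - z^2) ^ n) := by fun_prop
  have hnn : ∀ z, 0 ≤ K * Real.sqrt (r^2 - z^2) ^ n := fun z => by positivity
  rw [← MeasureTheory.ofReal_integral_eq_lintegral_ofReal
    (hcont.integrableOn_Icc) (Filter.Eventually.of_forall hnn)]
  rw [ENNReal.toReal_ofReal (integral_nonneg (fun z => hnn z))]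
  rw [MeasureTheory.integral_Icc_eq_integral_Ioc,
    ← intervalIntegral.integral_of_le (by linarith : r - h ≤ r)]

lemma model_integral (n : ℕ) (c r h : ℝ) (hc : 0 ≤ c) (h0 : 0 ≤ h) :
    ∫ z in (r-h)..r, Real.sqrt (c*(r-z)) ^ n
      = Real.sqrt c ^ n * (h ^ ((n:ℝ)/2 + 1) / ((n:ℝ)/2 + 1)) := by
  simp_rw [fun z => Real.sqrt_mul hc (r - z), mul_pow]
  rw [intervalIntegral.integral_const_mul]
  congr 1
  have h1 : (∫ z in (r-h)..r, Real.sqrt (r-z) ^ n)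
      = ∫ x in (r - r)..(r-(r-h)), Real.sqrt x ^ n :=
    intervalIntegral.integral_comp_sub_left (fun x => Real.sqrt x ^ n) r
  rw [h1, show r - r = 0 by ring, show r - (r-h) = h by ring]
  have h2 : (∫ x in (0:ℝ)..h, Real.sqrt x ^ n) = ∫ x in (0:ℝ)..h, x ^ ((n:ℝ)/2) := by
    apply intervalIntegral.integral_congr
    intro x hx
    rw [Set.uIcc_of_le h0] at hx
    exact sqrt_pow_eq hx.1 n
  have hne : ((n:ℝ)/2 + 1) ≠ 0 := by positivity
  rw [h2, integral_rpow (Or.inl (lt_of_lt_of_le (by norm_num) (by positivity : (0:ℝ) ≤ (n:ℝ)/2))), Real.zero_rpow hne]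
  ring

lemma integral_upper (n : ℕ) (hn : 0 < n) (r h : ℝ) (hr : 0 < r) (h0 : 0 < h) (hhr : h < r) :
    (∫ z in (r-h)..r, Real.sqrt (r^2 - z^2) ^ n)
      < Real.sqrt (2*r) ^ n * (h ^ ((n:ℝ)/2 + 1) / ((n:ℝ)/2 + 1)) := by
  rw [← model_integral n (2*r) r h (by linarith) h0.le]
  apply intervalIntegral.integral_lt_integral_of_continuousOn_of_le_of_exists_lt
    (by linarith) (Continuous.continuousOn (by fun_prop)) (Continuous.continuousOn (by fun_prop))
  · intro z hz
    apply pow_le_pow_left₀ (Real.sqrt_nonneg _)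
    apply Real.sqrt_le_sqrt
    nlinarith [hz.1, hz.2]
  · refine ⟨r - h, ⟨le_refl _, by linarith⟩, ?_⟩
    apply pow_lt_pow_left₀ _ (Real.sqrt_nonneg _) hn.ne'
    apply Real.sqrt_lt_sqrt (by nlinarith)
    nlinarith

lemma integral_lower (n : ℕ) (hn : 0 < n) (r h : ℝ) (hr : 0 < r) (h0 : 0 < h) (hhr : h < r) :
    Real.sqrt (2*r-h) ^ n * (h ^ ((n:ℝ)/2 + 1) / ((n:ℝ)/2 + 1))
      < ∫ z in (r-h)..r, Real.sqrt (r^2 - z^2) ^ n := by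
  rw [← model_integral n (2*r-h) r h (by linarith) h0.le]
  apply intervalIntegral.integral_lt_integral_of_continuousOn_of_le_of_exists_lt
    (by linarith) (Continuous.continuousOn (by fun_prop)) (Continuous.continuousOn (by fun_prop))
  · intro z hz
    apply pow_le_pow_left₀ (Real.sqrt_nonneg _)
    apply Real.sqrt_le_sqrt
    nlinarith [hz.1, hz.2]
  · refine ⟨r - h/2, ⟨by linarith, by linarith⟩, ?_⟩
    apply pow_lt_pow_left₀ _ (Real.sqrt_nonneg _) hn.ne'
    apply Real.sqrt_lt_sqrt (by nlinarith)
    nlinarith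

lemma ratio_rpow_ge (n : ℕ) (hn : 0 < n) : (1/2 : ℝ) ≤ ((n:ℝ)/((n:ℝ)+1)) ^ ((n:ℝ)/2) := by
  have hnR : (0:ℝ) < n := by exact_mod_cast hn
  set x : ℝ := (n:ℝ)/((n:ℝ)+1) with hx
  have hx0 : 0 < x := by positivity
  have h1 : ((1:ℝ)+1/n)^(n:ℕ) ≤ Real.exp 1 := by
    calc ((1:ℝ)+1/n)^(n:ℕ) ≤ (Real.exp (1/(n:ℝ)))^(n:ℕ) := by
          apply pow_le_pow_left₀ (by positivity)
          have := Real.add_one_le_exp (1/(n:ℝ)); linarith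
      _ = Real.exp 1 := by
          rw [← Real.exp_nat_mul]; congr 1; field_simp
  have h2 : ((1:ℝ)+1/n)^(n:ℕ) < 4 := lt_of_le_of_lt h1 (by
    have := Real.exp_one_lt_d9; linarith)
  have h3 : x * ((1:ℝ)+1/n) = 1 := by rw [hx]; field_simp
  have h4 : (1/4 : ℝ) ≤ x ^ (n:ℕ) := by
    have hy0 : (0:ℝ) < ((1:ℝ)+1/n)^(n:ℕ) := by positivity
    have : x ^ (n:ℕ) * ((1:ℝ)+1/n)^(n:ℕ) = 1 := by
      rw [← mul_pow, h3, one_pow]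
    nlinarith
  calc (1/2 : ℝ) = ((1/4:ℝ)) ^ ((1:ℝ)/2) := by
        rw [← Real.sqrt_eq_rpow, show (1/4:ℝ) = (1/2)^2 by norm_num,
          Real.sqrt_sq (by norm_num)]
    _ ≤ (x ^ (n:ℕ) : ℝ) ^ ((1:ℝ)/2) := Real.rpow_le_rpow (by norm_num) h4 (by norm_num)
    _ = x ^ ((n:ℝ)/2) := by
        rw [← Real.rpow_natCast x n, ← Real.rpow_mul hx0.le]
        ring_nf

/-- Volume bounds for spherical caps: for `0 < h < 2r/d`, the cap
`C^d(r,h) = {(y,z) : ‖y‖² + z² ≤ r², r - h ≤ z ≤ r}` of the Euclidean ball of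
radius `r` in `ℝ^d` satisfies
`(a_d/2) r^{(d-1)/2} h^{(d+1)/2} < Vol_d(C^d(r,h)) < a_d r^{(d-1)/2} h^{(d+1)/2}`,
where `a_d = (2π)^{(d-1)/2} / Γ((d+1)/2 + 1)`. -/
theorem volume_ball_cap_bounds (d : ℕ) (hd : 2 ≤ d) (r h : ℝ)
    (h0 : 0 < h) (hh : h < 2 * r / d) :
    (2 * Real.pi) ^ (((d : ℝ) - 1) / 2) / Real.Gamma (((d : ℝ) + 1) / 2 + 1) / 2
        * r ^ (((d : ℝ) - 1) / 2) * h ^ (((d : ℝ) + 1) / 2)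
      < (volume {p : EuclideanSpace ℝ (Fin (d - 1)) × ℝ |
          ‖p.1‖ ^ 2 + p.2 ^ 2 ≤ r ^ 2 ∧ r - h ≤ p.2 ∧ p.2 ≤ r}).toReal ∧
    (volume {p : EuclideanSpace ℝ (Fin (d - 1)) × ℝ |
          ‖p.1‖ ^ 2 + p.2 ^ 2 ≤ r ^ 2 ∧ r - h ≤ p.2 ∧ p.2 ≤ r}).toReal
      < (2 * Real.pi) ^ (((d : ℝ) - 1) / 2) / Real.Gamma (((d : ℝ) + 1) / 2 + 1)
        * r ^ (((d : ℝ) - 1) / 2) * h ^ (((d : ℝ) + 1) / 2) := by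
  obtain ⟨m, rfl⟩ : ∃ m, d = m + 2 := ⟨d - 2, by omega⟩
  have hdR : ((m+2:ℕ):ℝ) = (m:ℝ) + 2 := by push_cast; ring
  have hdpos : (0:ℝ) < (m:ℝ) + 2 := by positivity
  rw [hdR] at hh
  have hr : 0 < r := by
    by_contra hc
    push_neg at hc
    have : 2*r/((m:ℝ)+2) ≤ 0 := div_nonpos_of_nonpos_of_nonneg (by linarith) (by positivity)
    linarith
  have hhr : h < r := by
    have h1 : 2*r/((m:ℝ)+2) ≤ 2*r/2 := by
      apply div_le_div_of_nonneg_left (by linarith) (by norm_num) (by linarith)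
    have : 2*r/2 = r := by ring
    linarith
  have hmm : m + 2 - 1 = m + 1 := rfl
  rw [hmm, cap_vol_eq (m+1) (by omega) r h hr h0 hhr.le,
    intervalIntegral.integral_const_mul]
  have e1 : ((((m+2:ℕ)):ℝ) - 1)/2 = ((m:ℝ)+1)/2 := by push_cast; ring
  have e2 : ((((m+2:ℕ)):ℝ) + 1)/2 = ((m:ℝ)+1)/2 + 1 := by push_cast; ring
  rw [e1, e2]
  set α : ℝ := ((m:ℝ)+1)/2 with hα
  have hα0 : 0 < α := by positivity
  have hα1 : 0 < α + 1 := by positivity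
  have hΓ : 0 < Real.Gamma (α + 1) := Real.Gamma_pos_of_pos (by positivity)
  have hcast : ((m+1:ℕ):ℝ) = (m:ℝ) + 1 := by push_cast; ring
  -- normalize casts in K
  have hKeq : Real.sqrt π ^ (m+1) / Real.Gamma (((m+1:ℕ):ℝ)/2 + 1)
      = Real.sqrt π ^ (m+1) / Real.Gamma (α + 1) := by rw [hcast]
  rw [hKeq]
  set K : ℝ := Real.sqrt π ^ (m+1) / Real.Gamma (α + 1) with hKdef
  have hK0 : 0 < K := div_pos (pow_pos (Real.sqrt_pos.2 Real.pi_pos) _) hΓ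
  set T : ℝ := h ^ (α+1) / (α+1) with hTdef
  have hT0 : 0 ≤ T := by positivity
  have sπ : Real.sqrt π ^ (m+1) = π ^ α := by
    rw [sqrt_pow_eq Real.pi_pos.le, hcast]
  have s1 : Real.sqrt (2*r) ^ (m+1) = (2*r) ^ α := by
    rw [sqrt_pow_eq (by linarith) , hcast]
  have s2 : Real.sqrt (2*r-h) ^ (m+1) = (2*r-h) ^ α := by
    rw [sqrt_pow_eq (by linarith), hcast]
  have up := integral_upper (m+1) (by omega) r h hr h0 hhr
  have low := integral_lower (m+1) (by omega) r h hr h0 hhr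
  rw [hcast] at up low
  have hE : K * (Real.sqrt (2*r) ^ (m+1) * T) = (2*π)^α / Real.Gamma (α+1+1) * r^α * h^(α+1) := by
    rw [hKdef, hTdef, s1, sπ, Real.mul_rpow (by norm_num) Real.pi_pos.le,
      Real.mul_rpow (by norm_num) hr.le, Real.Gamma_add_one hα1.ne']
    field_simp
  have hd2 : (2*r)^α * (1/2) ≤ (2*r-h)^α := by
    have hrat := ratio_rpow_ge (m+1) (by omega)
    rw [hcast] at hrat
    have h2rh : 2*r*(((m:ℝ)+1)/((m:ℝ)+1+1)) ≤ 2*r-h := by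
      have key : 2*r - 2*r*(((m:ℝ)+1)/((m:ℝ)+1+1)) = 2*r/((m:ℝ)+2) := by
        field_simp
        ring
      linarith
    calc (2*r)^α * (1/2) ≤ (2*r)^α * ((((m:ℝ)+1)/((m:ℝ)+1+1))^α) := by
          apply mul_le_mul_of_nonneg_left hrat (by positivity)
      _ = (2*r*(((m:ℝ)+1)/((m:ℝ)+1+1)))^α := by
          rw [← Real.mul_rpow (by linarith : (0:ℝ) ≤ 2*r) (by positivity : (0:ℝ) ≤ ((m:ℝ)+1)/((m:ℝ)+1+1))]
      _ ≤ (2*r-h)^α := Real.rpow_le_rpow (by positivity) h2rh hα0.le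
  constructor
  · calc (2*π)^α / Real.Gamma (α+1+1) / 2 * r^α * h^(α+1)
        = ((2*π)^α / Real.Gamma (α+1+1) * r^α * h^(α+1))/2 := by ring
      _ = (K * (Real.sqrt (2*r) ^ (m+1) * T))/2 := by rw [hE]
      _ = (K*T) * ((2*r)^α * (1/2)) := by rw [s1]; ring
      _ ≤ (K*T) * ((2*r-h)^α) := by
          apply mul_le_mul_of_nonneg_left hd2 (mul_nonneg hK0.le hT0)
      _ = K * (Real.sqrt (2*r-h) ^ (m+1) * T) := by rw [s2]; ring
      _ < K * ∫ z in (r-h)..r, Real.sqrt (r^2 - z^2) ^ (m+1) := by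
          exact mul_lt_mul_of_pos_left low hK0
  · calc K * ∫ z in (r-h)..r, Real.sqrt (r^2 - z^2) ^ (m+1)
        < K * (Real.sqrt (2*r) ^ (m+1) * T) := mul_lt_mul_of_pos_left up hK0
      _ = (2*π)^α / Real.Gamma (α+1+1) * r^α * h^(α+1) := hE
end

section
/- Let K ⊂ ℝ^d be a convex body (compact convex set with nonempty interior) and let φ : K → [0,∞) be continuous. Define the weighted floating body K_δ^φ as the intersection of all closed half-spaces H⁻ such that the complementary closed half-space H⁺ satisfies ∫_{K ∩ H⁺} φ dVol_d ≤ δ, and define the minimal cap density mcd(x) = min over unit vectors u of ∫_{K ∩ {y : y·u ≥ x·u}} φ dVol_d. Then the interior of K_δ^φ equals the strict superlevel set {x ∈ K : mcd(x) > δ}. -/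
open MeasureTheory
open scoped RealInnerProductSpace

/-- The `φ`-weighted floating body `K_δ^φ`: the intersection of all closed half-spaces
`H⁻ = {y : ⟪y,u⟫ ≤ t}` whose complementary half-space `H⁺ = {y : ⟪y,u⟫ ≥ t}` cuts off
`φ`-weighted volume at most `δ` from `K`. -/
noncomputable def weightedFloatingBody {d : ℕ} (K : Set (EuclideanSpace ℝ (Fin d)))
    (φ : EuclideanSpace ℝ (Fin d) → ℝ) (δ : ℝ) : Set (EuclideanSpace ℝ (Fin d)) :=
  ⋂ (u : EuclideanSpace ℝ (Fin d)) (_ : ‖u‖ = 1) (t : ℝ)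
    (_ : ∫ y in K ∩ {y | t ≤ ⟪y, u⟫}, φ y ≤ δ), {y | ⟪y, u⟫ ≤ t}

/-- The minimal cap density: the infimum over unit directions `u` of the `φ`-weighted
volume of the cap of `K` cut off by the hyperplane through `x` with normal `u`. -/
noncomputable def minimalCapDensity {d : ℕ} (K : Set (EuclideanSpace ℝ (Fin d)))
    (φ : EuclideanSpace ℝ (Fin d) → ℝ) (x : EuclideanSpace ℝ (Fin d)) : ℝ :=
  ⨅ u : Metric.sphere (0 : EuclideanSpace ℝ (Fin d)) 1,
    ∫ y in K ∩ {y | ⟪x, (u : EuclideanSpace ℝ (Fin d))⟫ ≤ ⟪y, (u : EuclideanSpace ℝ (Fin d))⟫}, φ y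

namespace WFBAux

open Metric Set Filter Topology

variable {d : ℕ}

/-- The cap integral as a function of the pair (direction, level). -/
noncomputable def capFun (K : Set (EuclideanSpace ℝ (Fin d)))
    (φ : EuclideanSpace ℝ (Fin d) → ℝ) (q : EuclideanSpace ℝ (Fin d) × ℝ) : ℝ :=
  ∫ y in K ∩ {y | q.2 ≤ ⟪y, q.1⟫}, φ y

lemma halfspace_meas (u : EuclideanSpace ℝ (Fin d)) (t : ℝ) :
    MeasurableSet {y : EuclideanSpace ℝ (Fin d) | t ≤ ⟪y, u⟫} :=
  (isClosed_le continuous_const (continuous_id.inner continuous_const)).measurableSet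

lemma hyperplane_null {u : EuclideanSpace ℝ (Fin d)} (hu : u ≠ 0) (t : ℝ) :
    volume {y : EuclideanSpace ℝ (Fin d) | ⟪y, u⟫ = t} = 0 := by
  have huu : (0 : ℝ) < ⟪u, u⟫ :=
    lt_of_le_of_ne real_inner_self_nonneg (Ne.symm (inner_self_ne_zero.mpr hu))
  set p : EuclideanSpace ℝ (Fin d) := (t / ⟪u, u⟫) • u with hp
  have hup : ⟪u, p⟫ = t := by
    rw [hp, real_inner_smul_right, div_mul_cancel₀ _ huu.ne']
  set s : AffineSubspace ℝ (EuclideanSpace ℝ (Fin d)) :=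
    AffineSubspace.mk' p (LinearMap.ker (innerSL ℝ u).toLinearMap) with hs
  have hset : {y : EuclideanSpace ℝ (Fin d) | ⟪y, u⟫ = t} = (s : Set (EuclideanSpace ℝ (Fin d))) := by
    ext y
    simp only [Set.mem_setOf_eq, hs, AffineSubspace.mem_coe, AffineSubspace.mem_mk',
      LinearMap.mem_ker, vsub_eq_sub, ContinuousLinearMap.coe_coe, innerSL_apply_apply]
    rw [inner_sub_right, hup, real_inner_comm, sub_eq_zero]
  have hstop : s ≠ ⊤ := by
    intro h
    have hker : LinearMap.ker (innerSL ℝ u).toLinearMap = ⊤ := by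
      have h2 := congrArg AffineSubspace.direction h
      rwa [hs, AffineSubspace.direction_mk', AffineSubspace.direction_top] at h2
    have : u ∈ LinearMap.ker (innerSL ℝ u).toLinearMap := by rw [hker]; trivial
    rw [LinearMap.mem_ker, ContinuousLinearMap.coe_coe, innerSL_apply_apply] at this
    exact huu.ne' this
  rw [hset]
  exact Measure.addHaar_affineSubspace volume s hstop

lemma capFun_continuousAt {K : Set (EuclideanSpace ℝ (Fin d))} {φ : EuclideanSpace ℝ (Fin d) → ℝ}
    (hK : IsCompact K) (hφ : ContinuousOn φ K)
    {p : EuclideanSpace ℝ (Fin d) × ℝ} (hp : p.1 ≠ 0) :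
    ContinuousAt (capFun K φ) p := by
  have hKm : MeasurableSet K := hK.isClosed.measurableSet
  have hmeas : ∀ q : EuclideanSpace ℝ (Fin d) × ℝ,
      MeasurableSet (K ∩ {y : EuclideanSpace ℝ (Fin d) | q.2 ≤ ⟪y, q.1⟫}) :=
    fun q => hKm.inter (halfspace_meas _ _)
  have key : ∀ q : EuclideanSpace ℝ (Fin d) × ℝ, capFun K φ q
      = ∫ y, (K ∩ {y : EuclideanSpace ℝ (Fin d) | q.2 ≤ ⟪y, q.1⟫}).indicator φ y :=
    fun q => (integral_indicator (hmeas q)).symm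
  rw [ContinuousAt]
  simp only [key]
  apply tendsto_iff_seq_tendsto.mpr
  intro q hq
  have hq1 : Tendsto (fun n => (q n).1) atTop (𝓝 p.1) := (continuous_fst.tendsto p).comp hq
  have hq2 : Tendsto (fun n => (q n).2) atTop (𝓝 p.2) := (continuous_snd.tendsto p).comp hq
  simp only [Function.comp_def, key]
  apply tendsto_integral_of_dominated_convergence (K.indicator fun y => ‖φ y‖)
  · intro n
    rw [aestronglyMeasurable_indicator_iff (hmeas _)]
    exact (hφ.mono Set.inter_subset_left).aestronglyMeasurable (hmeas _)
  · exact MeasureTheory.IntegrableOn.integrable_indicator ((hφ.integrableOn_compact hK).norm) hKm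
  · intro n
    filter_upwards with y
    by_cases hy : y ∈ K ∩ {y : EuclideanSpace ℝ (Fin d) | (q n).2 ≤ ⟪y, (q n).1⟫}
    · rw [Set.indicator_of_mem hy, Set.indicator_of_mem hy.1]
    · rw [Set.indicator_of_notMem hy, norm_zero]
      exact Set.indicator_nonneg (fun z _ => norm_nonneg _) y
  · have hN : ∀ᵐ y : EuclideanSpace ℝ (Fin d), ⟪y, p.1⟫ ≠ p.2 := by
      rw [ae_iff]
      simpa using hyperplane_null hp p.2
    filter_upwards [hN] with y hy
    by_cases hyK : y ∈ K
    · have hyt : Tendsto (fun n => ⟪y, (q n).1⟫) atTop (𝓝 ⟪y, p.1⟫) :=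
        ((continuous_const.inner continuous_id).tendsto p.1).comp hq1
      rcases Ne.lt_or_gt hy with hc | hc
      · rw [Set.indicator_of_notMem (fun h => absurd h.2 (not_le.mpr hc))]
        refine Tendsto.congr' ?_ tendsto_const_nhds
        filter_upwards [hyt.eventually_lt hq2 hc] with n hn
        exact (Set.indicator_of_notMem (fun h => absurd h.2 (not_le.mpr hn)) φ).symm
      · rw [Set.indicator_of_mem (Set.mem_inter hyK hc.le)]
        refine Tendsto.congr' ?_ tendsto_const_nhds
        filter_upwards [hq2.eventually_lt hyt hc] with n hn
        exact (Set.indicator_of_mem (Set.mem_inter hyK hn.le) φ).symm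
    · have h0 : ∀ s : Set (EuclideanSpace ℝ (Fin d)), y ∉ K ∩ s := fun s h => hyK h.1
      simp only [Set.indicator_of_notMem (h0 _)]
      exact tendsto_const_nhds

end WFBAux

open Metric Set Filter Topology WFBAux

/-- For a convex body `K ⊂ ℝ^d` and a continuous nonnegative weight `φ`, the interior of the
weighted floating body `K_δ^φ` equals the strict `δ`-superlevel set of the minimal cap
density. -/
theorem interior_weightedFloatingBody_eq (d : ℕ) (hd : 2 ≤ d)
    (K : Set (EuclideanSpace ℝ (Fin d))) (hKcomp : IsCompact K) (hKconv : Convex ℝ K)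
    (hKint : (interior K).Nonempty)
    (φ : EuclideanSpace ℝ (Fin d) → ℝ) (hφcont : ContinuousOn φ K)
    (hφpos : ∀ x ∈ K, 0 ≤ φ x) (δ : ℝ) (hδ : 0 < δ) :
    interior (weightedFloatingBody K φ δ)
      = {x ∈ K | δ < minimalCapDensity K φ x} := by
  classical
  have hdpos : 0 < d := by omega
  haveI : Nonempty (Fin d) := ⟨⟨0, hdpos⟩⟩
  have hKm : MeasurableSet K := hKcomp.isClosed.measurableSet
  have hInt : IntegrableOn φ K := hφcont.integrableOn_compact hKcomp
  have hmeas : ∀ (u : EuclideanSpace ℝ (Fin d)) (t : ℝ),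
      MeasurableSet (K ∩ {y : EuclideanSpace ℝ (Fin d) | t ≤ ⟪y, u⟫}) :=
    fun u t => hKm.inter (halfspace_meas u t)
  have hmem : ∀ z, z ∈ weightedFloatingBody K φ δ ↔
      ∀ u : EuclideanSpace ℝ (Fin d), ‖u‖ = 1 → ∀ t : ℝ,
        (∫ y in K ∩ {y | t ≤ ⟪y, u⟫}, φ y) ≤ δ → ⟪z, u⟫ ≤ t := by
    intro z
    simp only [weightedFloatingBody, Set.mem_iInter, Set.mem_setOf_eq]
  -- the floating body is contained in `K`
  have hFK : weightedFloatingBody K φ δ ⊆ K := by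
    intro z hz
    by_contra hzK
    obtain ⟨f, c, hfK, hcz⟩ := geometric_hahn_banach_closed_point hKconv hKcomp.isClosed hzK
    set v := (InnerProductSpace.toDual ℝ (EuclideanSpace ℝ (Fin d))).symm f with hv
    have hvy : ∀ y, ⟪v, y⟫ = f y := fun y => InnerProductSpace.toDual_symm_apply
    have hv0 : v ≠ 0 := by
      intro h
      obtain ⟨x₀, hx₀⟩ := hKint
      have h1 : f x₀ < c := hfK x₀ (interior_subset hx₀)
      have hz0 : f z = 0 := by rw [← hvy, h, inner_zero_left]
      have hx0 : f x₀ = 0 := by rw [← hvy, h, inner_zero_left]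
      rw [hx0] at h1; rw [hz0] at hcz; linarith
    have hvpos : (0 : ℝ) < ‖v‖ := norm_pos_iff.mpr hv0
    set u : EuclideanSpace ℝ (Fin d) := ‖v‖⁻¹ • v with hu
    have hun : ‖u‖ = 1 := norm_smul_inv_norm hv0
    have hyu : ∀ y, ⟪y, u⟫ = ‖v‖⁻¹ * f y := by
      intro y
      rw [hu, real_inner_smul_right, real_inner_comm, hvy]
    have hempty : K ∩ {y : EuclideanSpace ℝ (Fin d) | ‖v‖⁻¹ * c ≤ ⟪y, u⟫} = ∅ := by
      ext y
      simp only [Set.mem_inter_iff, Set.mem_setOf_eq, Set.mem_empty_iff_false, iff_false, not_and]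
      intro hyK
      rw [hyu y]
      exact not_le.mpr (mul_lt_mul_of_pos_left (hfK y hyK) (inv_pos.mpr hvpos))
    have h0 : (∫ y in K ∩ {y : EuclideanSpace ℝ (Fin d) | ‖v‖⁻¹ * c ≤ ⟪y, u⟫}, φ y) ≤ δ := by
      rw [hempty]
      simp [hδ.le]
    have hle := (hmem z).mp hz u hun (‖v‖⁻¹ * c) h0
    rw [hyu z] at hle
    exact absurd hle (not_le.mpr (mul_lt_mul_of_pos_left hcz (inv_pos.mpr hvpos)))
  have hnn : ∀ (u : EuclideanSpace ℝ (Fin d)) (t : ℝ),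
      0 ≤ ∫ y in K ∩ {y | t ≤ ⟪y, u⟫}, φ y :=
    fun u t => setIntegral_nonneg (hmeas u t) (fun y hy => hφpos y hy.1)
  have hmono : ∀ (u : EuclideanSpace ℝ (Fin d)) {t s : ℝ}, t ≤ s →
      (∫ y in K ∩ {y | s ≤ ⟪y, u⟫}, φ y) ≤ ∫ y in K ∩ {y | t ≤ ⟪y, u⟫}, φ y := by
    intro u t s hts
    apply setIntegral_mono_set (hInt.mono_set Set.inter_subset_left)
    · exact ae_restrict_of_forall_mem (hmeas u t) (fun y hy => hφpos y hy.1)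
    · exact HasSubset.Subset.eventuallyLE (fun y hy => ⟨hy.1, hts.trans hy.2⟩)
  haveI : Nonempty (Metric.sphere (0 : EuclideanSpace ℝ (Fin d)) 1) := by
    refine ⟨⟨EuclideanSpace.single ⟨0, hdpos⟩ (1 : ℝ), ?_⟩⟩
    simp [mem_sphere_zero_iff_norm, EuclideanSpace.norm_single]
  have hsph : ∀ u : Metric.sphere (0 : EuclideanSpace ℝ (Fin d)) 1,
      (u : EuclideanSpace ℝ (Fin d)) ≠ 0 := by
    intro u h
    have h2 := mem_sphere_zero_iff_norm.mp u.2
    rw [h, norm_zero] at h2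
    norm_num at h2
  have hmcd : ∀ x, minimalCapDensity K φ x
      = ⨅ u : Metric.sphere (0 : EuclideanSpace ℝ (Fin d)) 1,
          capFun K φ ((u : EuclideanSpace ℝ (Fin d)), ⟪x, (u : EuclideanSpace ℝ (Fin d))⟫) :=
    fun x => rfl
  have hConth : ∀ x : EuclideanSpace ℝ (Fin d),
      Continuous (fun u : Metric.sphere (0 : EuclideanSpace ℝ (Fin d)) 1 =>
        capFun K φ ((u : EuclideanSpace ℝ (Fin d)), ⟪x, (u : EuclideanSpace ℝ (Fin d))⟫)) := by
    intro x
    apply continuous_iff_continuousAt.mpr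
    intro u
    have hmap : Continuous (fun u : Metric.sphere (0 : EuclideanSpace ℝ (Fin d)) 1 =>
        ((u : EuclideanSpace ℝ (Fin d)), ⟪x, (u : EuclideanSpace ℝ (Fin d))⟫)) :=
      continuous_subtype_val.prodMk (continuous_const.inner continuous_subtype_val)
    exact (capFun_continuousAt hKcomp hφcont (hsph u)).comp hmap.continuousAt
  ext x
  simp only [Set.mem_setOf_eq]
  constructor
  · intro hx
    have hxF : x ∈ weightedFloatingBody K φ δ := interior_subset hx
    refine ⟨hFK hxF, ?_⟩
    obtain ⟨ε, hε, hball⟩ := Metric.mem_nhds_iff.mp (mem_interior_iff_mem_nhds.mp hx)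
    have hpt : ∀ u : Metric.sphere (0 : EuclideanSpace ℝ (Fin d)) 1,
        δ < capFun K φ ((u : EuclideanSpace ℝ (Fin d)), ⟪x, (u : EuclideanSpace ℝ (Fin d))⟫) := by
      intro u
      by_contra hle
      push_neg at hle
      set w : EuclideanSpace ℝ (Fin d) := (u : EuclideanSpace ℝ (Fin d)) with hw
      set z := x + (ε / 2) • w with hzdef
      have hzball : z ∈ Metric.ball x ε := by
        rw [mem_ball_iff_norm]
        have hzx : z - x = (ε / 2) • w := by rw [hzdef]; abel
        rw [hzx, norm_smul, mem_sphere_zero_iff_norm.mp u.2]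
        rw [Real.norm_eq_abs, abs_of_pos (by linarith)]
        linarith
      have hzF := hball hzball
      have hle2 := (hmem z).mp hzF w (mem_sphere_zero_iff_norm.mp u.2) ⟪x, w⟫ hle
      rw [hzdef, inner_add_left, real_inner_smul_left] at hle2
      have huu : ⟪w, w⟫ = 1 := by
        rw [real_inner_self_eq_norm_mul_norm, mem_sphere_zero_iff_norm.mp u.2]
        norm_num
      rw [huu] at hle2
      linarith
    obtain ⟨u₀, -, hu₀⟩ := isCompact_univ.exists_isMinOn Set.univ_nonempty (hConth x).continuousOn
    rw [hmcd x]
    calc δ < capFun K φ ((u₀ : EuclideanSpace ℝ (Fin d)), ⟪x, (u₀ : EuclideanSpace ℝ (Fin d))⟫) :=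
        hpt u₀
      _ ≤ _ := le_ciInf (fun u => hu₀ (Set.mem_univ u))
  · rintro ⟨hxK, hxm⟩
    rw [hmcd x] at hxm
    have hbdd : BddBelow (Set.range fun u : Metric.sphere (0 : EuclideanSpace ℝ (Fin d)) 1 =>
        capFun K φ ((u : EuclideanSpace ℝ (Fin d)), ⟪x, (u : EuclideanSpace ℝ (Fin d))⟫)) := by
      refine ⟨0, ?_⟩
      rintro r ⟨u, rfl⟩
      exact hnn _ _
    have hpt : ∀ u : Metric.sphere (0 : EuclideanSpace ℝ (Fin d)) 1,
        δ < capFun K φ ((u : EuclideanSpace ℝ (Fin d)), ⟪x, (u : EuclideanSpace ℝ (Fin d))⟫) :=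
      fun u => lt_of_lt_of_le hxm (ciInf_le hbdd u)
    set S : Set (EuclideanSpace ℝ (Fin d) × ℝ) :=
      (fun u : Metric.sphere (0 : EuclideanSpace ℝ (Fin d)) 1 =>
        ((u : EuclideanSpace ℝ (Fin d)), ⟪x, (u : EuclideanSpace ℝ (Fin d))⟫)) '' Set.univ with hS
    have hScomp : IsCompact S :=
      isCompact_univ.image
        (continuous_subtype_val.prodMk (continuous_const.inner continuous_subtype_val))
    have hUopen : IsOpen ({p : EuclideanSpace ℝ (Fin d) × ℝ | p.1 ≠ 0}
        ∩ (capFun K φ) ⁻¹' Set.Ioi δ) := by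
      have hopen1 : IsOpen {p : EuclideanSpace ℝ (Fin d) × ℝ | p.1 ≠ 0} :=
        isOpen_ne.preimage continuous_fst
      refine ContinuousOn.isOpen_inter_preimage ?_ hopen1 isOpen_Ioi
      intro p hp
      exact (capFun_continuousAt hKcomp hφcont hp).continuousWithinAt
    have hSU : S ⊆ {p : EuclideanSpace ℝ (Fin d) × ℝ | p.1 ≠ 0}
        ∩ (capFun K φ) ⁻¹' Set.Ioi δ := by
      rintro p ⟨u, -, rfl⟩
      exact ⟨hsph u, hpt u⟩
    obtain ⟨ε, hε, hthick⟩ := hScomp.exists_thickening_subset_open hUopen hSU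
    have hball : Metric.ball x (ε / 2) ⊆ weightedFloatingBody K φ δ := by
      intro z hz
      rw [hmem z]
      intro u hu t hle
      by_contra hzt
      push_neg at hzt
      have hp' : ((u, ⟪x, u⟫ + ε / 2) : EuclideanSpace ℝ (Fin d) × ℝ)
          ∈ Metric.thickening ε S := by
        rw [Metric.mem_thickening_iff]
        refine ⟨(u, ⟪x, u⟫), ⟨⟨u, mem_sphere_zero_iff_norm.mpr hu⟩, Set.mem_univ _, rfl⟩, ?_⟩
        rw [Prod.dist_eq]
        simp only [dist_self, Real.dist_eq, add_sub_cancel_left]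
        rw [max_lt_iff]
        constructor
        · exact hε
        · rw [abs_of_pos (by linarith)]; linarith
      have hgt : δ < capFun K φ (u, ⟪x, u⟫ + ε / 2) := (hthick hp').2
      have hzx : ⟪z, u⟫ ≤ ⟪x, u⟫ + ε / 2 := by
        have h1 : ⟪z - x, u⟫ ≤ ‖z - x‖ * ‖u‖ := real_inner_le_norm _ _
        have h2 : ‖z - x‖ < ε / 2 := by
          rw [← dist_eq_norm]
          exact mem_ball.mp hz
        have h3 : ⟪z, u⟫ = ⟪x, u⟫ + ⟪z - x, u⟫ := by
          rw [← inner_add_left]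
          norm_num
        rw [hu] at h1
        rw [h3]
        nlinarith
      have hts : t ≤ ⟪x, u⟫ + ε / 2 := le_trans hzt.le hzx
      have hmono' := hmono u hts
      have : capFun K φ (u, ⟪x, u⟫ + ε / 2) ≤ δ := le_trans hmono' hle
      linarith
    exact interior_maximal hball Metric.isOpen_ball (Metric.mem_ball_self (by linarith))
end

section
/- Let K ⊂ ℝ^d be a convex body, φ : K → [0,∞) continuous, and suppose additionally that φ is strictly positive on an open neighborhood of the boundary ∂K. Then the weighted floating body K_δ^φ equals the closed superlevel set {x ∈ K : mcd_{K,φ}(x) ≥ δ} of the minimal cap density function. -/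
open MeasureTheory
open scoped RealInnerProductSpace

abbrev Eu (d : ℕ) := EuclideanSpace ℝ (Fin d)

set_option maxHeartbeats 1600000 in
/-- If the continuous nonnegative weight `φ` is strictly positive on an open neighborhood of
`∂K`, then the weighted floating body `K_δ^φ` equals the closed `δ`-superlevel set of the
minimal cap density. -/
theorem weightedFloatingBody_eq_superlevel (d : ℕ) (hd : 2 ≤ d)
    (K : Set (EuclideanSpace ℝ (Fin d))) (hKcomp : IsCompact K) (hKconv : Convex ℝ K)
    (hKint : (interior K).Nonempty)
    (φ : EuclideanSpace ℝ (Fin d) → ℝ) (hφcont : ContinuousOn φ K)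
    (hφpos : ∀ x ∈ K, 0 ≤ φ x)
    (U : Set (EuclideanSpace ℝ (Fin d))) (hU : IsOpen U) (hUK : frontier K ⊆ U)
    (hφU : ∀ x ∈ U ∩ K, 0 < φ x)
    (δ : ℝ) (hδ : 0 < δ) :
    weightedFloatingBody K φ δ = {x ∈ K | δ ≤ minimalCapDensity K φ x} := by
  classical
  -- basic facts
  haveI : Nontrivial (Eu d) := by
    have : 0 < Module.finrank ℝ (Eu d) := by
      rw [finrank_euclideanSpace_fin]; omega
    exact Module.nontrivial_of_finrank_pos this
  have hKne : K.Nonempty := hKint.mono interior_subset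
  have hKmeas : MeasurableSet K := hKcomp.isClosed.measurableSet
  have hvcont : ∀ u : Eu d, Continuous fun y : Eu d => ⟪y, u⟫ :=
    fun u => continuous_id.inner continuous_const
  have hHmeas : ∀ (u : Eu d) (t : ℝ), MeasurableSet {y : Eu d | t ≤ ⟪y, u⟫} := fun u t =>
    (isClosed_le continuous_const (hvcont u)).measurableSet
  have hIntK : IntegrableOn φ K := hφcont.integrableOn_compact hKcomp
  have hIntOn : ∀ S : Set (Eu d), IntegrableOn φ (K ∩ S) := fun S =>
    hIntK.mono_set Set.inter_subset_left
  -- the cap integral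
  set F : Eu d → ℝ → ℝ := fun u t => ∫ y in K ∩ {y | t ≤ ⟪y, u⟫}, φ y with hF
  have hF0 : ∀ u t, 0 ≤ F u t := fun u t =>
    setIntegral_nonneg (hKmeas.inter (hHmeas u t)) (fun y hy => hφpos y hy.1)
  have hφae : ∀ S : Set (Eu d), MeasurableSet S → 0 ≤ᶠ[ae (volume.restrict (K ∩ S))] φ := by
    intro S hS
    exact ae_restrict_of_forall_mem (hKmeas.inter hS) (fun y hy => hφpos y hy.1)
  have hFmono : ∀ (u : Eu d) (t t' : ℝ), t ≤ t' → F u t' ≤ F u t := by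
    intro u t t' htt'
    refine setIntegral_mono_set (hIntOn _) (hφae _ (hHmeas u t)) (Filter.Eventually.of_forall ?_)
    exact fun y hy => ⟨hy.1, le_trans htt' hy.2⟩
  have hSlabMeas : ∀ (u : Eu d) (t t' : ℝ),
      MeasurableSet {y : Eu d | t ≤ ⟪y, u⟫ ∧ ⟪y, u⟫ < t'} := by
    intro u t t'
    exact (hHmeas u t).inter ((isOpen_lt (hvcont u) continuous_const).measurableSet)
  have hFadd : ∀ (u : Eu d) (t t' : ℝ), t ≤ t' →
      F u t = (∫ y in K ∩ {y | t ≤ ⟪y, u⟫ ∧ ⟪y, u⟫ < t'}, φ y) + F u t' := by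
    intro u t t' htt'
    have hdisj : Disjoint (K ∩ {y : Eu d | t ≤ ⟪y, u⟫ ∧ ⟪y, u⟫ < t'})
        (K ∩ {y : Eu d | t' ≤ ⟪y, u⟫}) := by
      refine Set.disjoint_left.2 ?_
      rintro y ⟨-, -, h2⟩ ⟨-, h3⟩
      exact absurd h3 (not_le.2 h2)
    have hun : K ∩ {y : Eu d | t ≤ ⟪y, u⟫} =
        (K ∩ {y : Eu d | t ≤ ⟪y, u⟫ ∧ ⟪y, u⟫ < t'}) ∪ (K ∩ {y : Eu d | t' ≤ ⟪y, u⟫}) := by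
      ext y
      simp only [Set.mem_inter_iff, Set.mem_setOf_eq, Set.mem_union]
      constructor
      · rintro ⟨hyK, hy⟩
        rcases lt_or_ge (⟪y, u⟫) t' with h | h
        · exact Or.inl ⟨hyK, hy, h⟩
        · exact Or.inr ⟨hyK, h⟩
      · rintro (⟨hyK, hy, -⟩ | ⟨hyK, hy⟩)
        · exact ⟨hyK, hy⟩
        · exact ⟨hyK, le_trans htt' hy⟩
    show (∫ y in K ∩ {y : Eu d | t ≤ ⟪y, u⟫}, φ y) = _
    rw [hun, setIntegral_union hdisj (hKmeas.inter (hHmeas u t')) (hIntOn _) (hIntOn _)]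
  -- membership in the floating body, unfolded
  have hWFB : ∀ x : Eu d, x ∈ weightedFloatingBody K φ δ ↔
      ∀ u : Eu d, ‖u‖ = 1 → ∀ t : ℝ, F u t ≤ δ → ⟪x, u⟫ ≤ t := by
    intro x
    simp only [weightedFloatingBody, Set.mem_iInter, Set.mem_setOf_eq]
    exact Iff.rfl
  -- minimal cap density as an infimum of F
  have hmcd : ∀ x : Eu d, minimalCapDensity K φ x =
      ⨅ u : Metric.sphere (0 : Eu d) 1, F (u : Eu d) ⟪x, (u : Eu d)⟫ := fun x => rfl
  haveI hsne : Nonempty (Metric.sphere (0 : Eu d) 1) :=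
    (NormedSpace.sphere_nonempty.2 zero_le_one).to_subtype
  have hnorm_sphere : ∀ u : Metric.sphere (0 : Eu d) 1, ‖(u : Eu d)‖ = 1 := by
    intro u
    have := u.2
    simpa [mem_sphere_iff_norm] using this
  have hBdd : ∀ x : Eu d, BddBelow (Set.range fun u : Metric.sphere (0 : Eu d) 1 =>
      F (u : Eu d) ⟪x, (u : Eu d)⟫) := by
    intro x
    refine ⟨0, ?_⟩
    rintro - ⟨u, rfl⟩
    exact hF0 _ _
  -- bound on φ
  obtain ⟨C, hC⟩ := hKcomp.exists_bound_of_continuousOn hφcont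
  have hC0 : 0 ≤ C := le_trans (norm_nonneg _) (hC _ hKne.choose_spec)
  -- slab integral bound
  have hslab_bound : ∀ S : Set (Eu d),
      (∫ y in K ∩ S, φ y) ≤ C * (volume (K ∩ S)).toReal := by
    intro S
    have h1 : ‖∫ y in K ∩ S, φ y‖ ≤ C * (volume (K ∩ S)).toReal := by
      refine norm_setIntegral_le_of_norm_le_const ?_ (fun y hy => hC y hy.1)
      · exact lt_of_le_of_lt (measure_mono Set.inter_subset_left) hKcomp.measure_lt_top
    calc (∫ y in K ∩ S, φ y) ≤ ‖∫ y in K ∩ S, φ y‖ := le_abs_self _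
    _ ≤ _ := h1
  -- hyperplane has measure zero
  have hplane : ∀ (u : Eu d) (c : ℝ), ‖u‖ = 1 → volume {y : Eu d | ⟪y, u⟫ = c} = 0 := by
    intro u c hu
    have hlin : IsLinearMap ℝ fun y : Eu d => ⟪y, u⟫ :=
      ⟨fun a b => inner_add_left a b u, fun m a => real_inner_smul_left a u m⟩
    have hconv : Convex ℝ {y : Eu d | c ≤ ⟪y, u⟫} := convex_halfSpace_ge hlin c
    have hsub : {y : Eu d | ⟪y, u⟫ = c} ⊆ frontier {y : Eu d | c ≤ ⟪y, u⟫} := by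
      intro y hy
      rw [Set.mem_setOf_eq] at hy
      constructor
      · exact subset_closure hy.ge
      · intro hyint
        rw [mem_interior_iff_mem_nhds, Metric.mem_nhds_iff] at hyint
        obtain ⟨ε, hε, hball⟩ := hyint
        have hz : y - (ε / 2) • u ∈ Metric.ball y ε := by
          rw [Metric.mem_ball, dist_eq_norm]
          have : y - (ε / 2) • u - y = -((ε / 2) • u) := by abel
          rw [this, norm_neg, norm_smul, hu, Real.norm_eq_abs, abs_of_pos (by positivity)]
          linarith
        have := hball hz
        rw [Set.mem_setOf_eq, inner_sub_left, real_inner_smul_left, hy,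
          real_inner_self_eq_norm_sq, hu] at this
        nlinarith
    exact measure_mono_null hsub (hconv.addHaar_frontier volume)
  -- Main extensionality argument
  ext x
  rw [hWFB, Set.mem_setOf_eq]
  constructor
  · -- floating body ⊆ superlevel set
    intro hx
    -- first, x ∈ K, by separation
    have hxK : x ∈ K := by
      by_contra hxK
      obtain ⟨f, c, hfK, hfx⟩ := geometric_hahn_banach_closed_point hKconv hKcomp.isClosed hxK
      set w := (InnerProductSpace.toDual ℝ (Eu d)).symm f with hwdef
      have hwf : ∀ y : Eu d, ⟪w, y⟫ = f y := fun y => by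
        rw [hwdef, InnerProductSpace.toDual_symm_apply]
      have hw0 : w ≠ 0 := by
        intro h
        obtain ⟨z, hz⟩ := hKne
        have h1 : f z = 0 := by rw [← hwf z, h, inner_zero_left]
        have h2 : f x = 0 := by rw [← hwf x, h, inner_zero_left]
        have := hfK z hz
        rw [h1] at this
        rw [h2] at hfx
        linarith
      have hnw : 0 < ‖w‖ := norm_pos_iff.2 hw0
      set u : Eu d := ‖w‖⁻¹ • w with hudef
      have hu : ‖u‖ = 1 := norm_smul_inv_norm hw0
      have hyu : ∀ y : Eu d, ⟪y, u⟫ = ‖w‖⁻¹ * f y := fun y => by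
        rw [hudef, real_inner_smul_right, real_inner_comm, hwf]
      have hempty : K ∩ {y : Eu d | ‖w‖⁻¹ * c ≤ ⟪y, u⟫} = ∅ := by
        ext y
        simp only [Set.mem_inter_iff, Set.mem_setOf_eq, Set.mem_empty_iff_false, iff_false,
          not_and, not_le]
        intro hyK
        rw [hyu y]
        exact mul_lt_mul_of_pos_left (hfK y hyK) (inv_pos.2 hnw)
      have hF00 : F u (‖w‖⁻¹ * c) ≤ δ := by
        have : F u (‖w‖⁻¹ * c) = 0 := by
          show (∫ y in K ∩ {y : Eu d | ‖w‖⁻¹ * c ≤ ⟪y, u⟫}, φ y) = 0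
          rw [hempty]
          simp
        rw [this]
        exact le_of_lt hδ
      have := hx u hu _ hF00
      rw [hyu x] at this
      have hlt : ‖w‖⁻¹ * c < ‖w‖⁻¹ * f x := mul_lt_mul_of_pos_left hfx (inv_pos.2 hnw)
      linarith
    refine ⟨hxK, ?_⟩
    rw [hmcd]
    refine le_ciInf ?_
    intro u
    by_contra hcon
    push_neg at hcon
    set u0 : Eu d := (u : Eu d) with hu0def
    set s : ℝ := ⟪x, u0⟫ with hsdef
    have hu0 : ‖u0‖ = 1 := hnorm_sphere u
    -- shrinking slabs
    set Sn : ℕ → Set (Eu d) :=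
      fun n => K ∩ {y : Eu d | s - 1 / (n + 1) ≤ ⟪y, u0⟫ ∧ ⟪y, u0⟫ < s} with hSndef
    have hSnmeas : ∀ n, NullMeasurableSet (Sn n) volume := fun n =>
      (hKmeas.inter (hSlabMeas u0 (s - 1 / (n + 1)) s)).nullMeasurableSet
    have hSnanti : Antitone Sn := by
      intro n m hnm y hy
      obtain ⟨hyK, hy1, hy2⟩ := hy
      refine ⟨hyK, ?_, hy2⟩
      have h1 : (1 : ℝ) / (m + 1) ≤ 1 / (n + 1) := by
        apply one_div_le_one_div_of_le
        · positivity
        · have : (n : ℝ) ≤ m := Nat.cast_le.2 hnm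
          linarith
      linarith
    have hSninter : ⋂ n, Sn n = ∅ := by
      ext y
      simp only [Set.mem_iInter, Set.mem_empty_iff_false, iff_false, not_forall]
      by_contra hcon2
      push_neg at hcon2
      have h2 := (hcon2 0).2.2
      have hεpos : 0 < s - ⟪y, u0⟫ := by linarith
      obtain ⟨n, hn⟩ := exists_nat_one_div_lt hεpos
      have h3 := (hcon2 n).2.1
      linarith
    have hSn0 : volume (Sn 0) ≠ ⊤ :=
      ne_of_lt (lt_of_le_of_lt (measure_mono Set.inter_subset_left) hKcomp.measure_lt_top)
    have hT := tendsto_measure_iInter_atTop hSnmeas hSnanti ⟨0, hSn0⟩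
    rw [hSninter, measure_empty] at hT
    have hT2 : Filter.Tendsto (fun n => (volume (Sn n)).toReal) Filter.atTop (nhds 0) := by
      have := (ENNReal.tendsto_toReal (by simp : (0 : ENNReal) ≠ ⊤)).comp hT
      exact this
    have hT3 : Filter.Tendsto (fun n => C * (volume (Sn n)).toReal) Filter.atTop (nhds 0) := by
      have := hT2.const_mul C
      simpa using this
    have hev : ∀ᶠ n in Filter.atTop, C * (volume (Sn n)).toReal < δ - F u0 s :=
      hT3.eventually (eventually_lt_nhds (by linarith))
    obtain ⟨n, hn⟩ := hev.exists
    have hstep : F u0 (s - 1 / (n + 1)) ≤ δ := by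
      have hle : s - 1 / (n + 1) ≤ s := by
        have : (0 : ℝ) < 1 / (n + 1) := by positivity
        linarith
      have h4 := hFadd u0 (s - 1 / (n + 1)) s hle
      have h5 := hslab_bound {y : Eu d | s - 1 / (n + 1) ≤ ⟪y, u0⟫ ∧ ⟪y, u0⟫ < s}
      rw [h4]
      have : volume (Sn n) = volume (K ∩ {y : Eu d | s - 1 / (n + 1) ≤ ⟪y, u0⟫ ∧ ⟪y, u0⟫ < s}) :=
        rfl
      rw [this] at hn
      linarith
    have := hx u0 hu0 _ hstep
    have hpos : (0 : ℝ) < 1 / (n + 1) := by positivity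
    rw [← hsdef] at this
    linarith
  · -- superlevel set ⊆ floating body
    rintro ⟨hxK, hmcdx⟩
    intro u hu t hFt
    by_contra hts
    push_neg at hts
    set s : ℝ := ⟪x, u⟫ with hsdef
    have hcap : ∀ u' : Eu d, ‖u'‖ = 1 → δ ≤ F u' ⟪x, u'⟫ := by
      intro u' hu'
      refine le_trans ?_ (ciInf_le (hBdd x) ⟨u', mem_sphere_zero_iff_norm.2 hu'⟩)
      rw [hmcd] at hmcdx
      exact hmcdx
    by_cases hlow : ∃ y ∈ K, ⟪y, u⟫ < s
    · obtain ⟨y₁, hy₁K, hy₁⟩ := hlow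
      set r : ℝ := (max t ⟪y₁, u⟫ + s) / 2 with hrdef
      have hmax : max t ⟪y₁, u⟫ < s := max_lt hts hy₁
      have hrt : t < r := by
        have := le_max_left t ⟪y₁, u⟫
        rw [hrdef]; linarith
      have hrs : r < s := by rw [hrdef]; linarith
      have hry : ⟪y₁, u⟫ ≤ r := by
        have := le_max_right t ⟪y₁, u⟫
        rw [hrdef]; linarith
      -- a point of K at level r
      obtain ⟨w, hwK, hwr⟩ := hKconv.isPreconnected.intermediate_value hy₁K hxK
        ((hvcont u).continuousOn) ⟨hry, le_of_lt hrs⟩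
      have hwr2 : ⟪w, u⟫ = r := hwr
      -- an orthogonal direction
      have hu0 : u ≠ 0 := by
        intro h
        rw [h, norm_zero] at hu
        norm_num at hu
      have hne : (Submodule.span ℝ {u})ᗮ ≠ ⊥ := by
        intro h
        have htop := Submodule.orthogonal_eq_bot_iff.1 h
        have h1 : Module.finrank ℝ (Submodule.span ℝ {u} : Submodule ℝ (Eu d)) = 1 :=
          finrank_span_singleton hu0
        rw [htop, finrank_top, finrank_euclideanSpace_fin] at h1
        omega
      obtain ⟨e, heo, he0⟩ := (Submodule.ne_bot_iff _).1 hne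
      have heu : ⟪e, u⟫ = 0 := by
        have h1 := (Submodule.mem_orthogonal _ e).1 heo u (Submodule.mem_span_singleton_self u)
        rw [real_inner_comm] at h1
        exact h1
      have hne0 : (0 : ℝ) < ‖e‖ := norm_pos_iff.2 he0
      -- the escape point
      set L : Set ℝ := {lam : ℝ | 0 ≤ lam ∧ w + lam • e ∈ K} with hLdef
      have hL0 : (0 : ℝ) ∈ L := by
        refine ⟨le_refl 0, ?_⟩
        rw [zero_smul, add_zero]
        exact hwK
      have hLbdd : BddAbove L := by
        obtain ⟨R, hR⟩ := hKcomp.isBounded.exists_norm_le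
        refine ⟨(R + ‖w‖) / ‖e‖, ?_⟩
        rintro lam ⟨hlam0, hlamK⟩
        rw [le_div_iff₀ hne0]
        have h1 : ‖lam • e‖ = lam * ‖e‖ := by
          rw [norm_smul, Real.norm_eq_abs, abs_of_nonneg hlam0]
        have h2 : ‖lam • e‖ ≤ ‖w + lam • e‖ + ‖w‖ := by
          have := norm_sub_le (w + lam • e) w
          have he : w + lam • e - w = lam • e := by abel
          rw [he] at this
          linarith
        have h3 := hR _ hlamK
        linarith [h1 ▸ h2]
      have hLclosed : IsClosed L := by
        have : L = Set.Ici (0 : ℝ) ∩ (fun lam : ℝ => w + lam • e) ⁻¹' K := by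
          ext lam
          simp [hLdef, Set.mem_Ici]
        rw [this]
        exact isClosed_Ici.inter (hKcomp.isClosed.preimage (continuous_const.add (continuous_id.smul continuous_const)))
      set lam0 : ℝ := sSup L with hlamdef
      have hlammem : lam0 ∈ L := hLclosed.csSup_mem ⟨0, hL0⟩ hLbdd
      set p : Eu d := w + lam0 • e with hpdef
      have hpK : p ∈ K := hlammem.2
      have hpr : ⟪p, u⟫ = r := by
        rw [hpdef, inner_add_left, real_inner_smul_left, heu, hwr2]
        ring
      have hpint : p ∉ interior K := by
        intro hpint
        obtain ⟨ε, hε, hball⟩ := Metric.isOpen_iff.1 isOpen_interior p hpint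
        set lam1 : ℝ := lam0 + ε / (2 * ‖e‖) with hlam1def
        have hmem1 : w + lam1 • e ∈ Metric.ball p ε := by
          rw [Metric.mem_ball, dist_eq_norm]
          have heq : w + lam1 • e - p = (ε / (2 * ‖e‖)) • e := by
            rw [hpdef, hlam1def, add_smul]
            abel
          rw [heq, norm_smul, Real.norm_eq_abs, abs_of_pos (div_pos hε (by linarith))]
          have h9 : ε / (2 * ‖e‖) * ‖e‖ = ε / 2 := by
            field_simp
          rw [h9]
          linarith
        have hmem2 : lam1 ∈ L := by
          refine ⟨?_, interior_subset (hball hmem1)⟩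
          have := hlammem.1
          positivity
        have := le_csSup hLbdd hmem2
        rw [hlam1def] at this
        have : (0 : ℝ) < ε / (2 * ‖e‖) := by positivity
        linarith [le_csSup hLbdd hmem2]
      have hpU : p ∈ U := by
        apply hUK
        rw [hKcomp.isClosed.frontier_eq]
        exact ⟨hpK, hpint⟩
      obtain ⟨ε₁, hε₁, hball₁⟩ := Metric.isOpen_iff.1 hU p hpU
      set ε : ℝ := min ε₁ (min (r - t) (s - r)) with hεdef
      have hεpos : 0 < ε := lt_min hε₁ (lt_min (by linarith) (by linarith))
      -- interior point near p
      obtain ⟨z, hz⟩ := hKint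
      set θ : ℝ := min 1 (ε / (2 * (‖z - p‖ + 1))) with hθdef
      have hθ0 : 0 < θ := lt_min one_pos (by positivity)
      have hθ1 : θ ≤ 1 := min_le_left _ _
      set q : Eu d := θ • z + (1 - θ) • p with hqdef
      have hqint : q ∈ interior K :=
        hKconv.combo_interior_closure_mem_interior hz (subset_closure hpK) hθ0
          (by linarith) (by ring)
      have hqp : dist q p < ε := by
        rw [dist_eq_norm]
        have heq : q - p = θ • (z - p) := by
          rw [hqdef]
          module
        rw [heq, norm_smul, Real.norm_eq_abs, abs_of_pos hθ0]
        have h1 : θ ≤ ε / (2 * (‖z - p‖ + 1)) := min_le_right _ _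
        have h2 : ‖z - p‖ < ‖z - p‖ + 1 := by linarith
        have h3 : 0 ≤ ‖z - p‖ := norm_nonneg _
        calc θ * ‖z - p‖ ≤ ε / (2 * (‖z - p‖ + 1)) * ‖z - p‖ := by
              apply mul_le_mul_of_nonneg_right h1 h3
        _ < ε := by
              rw [div_mul_eq_mul_div, div_lt_iff₀ (by positivity)]
              nlinarith
      have hqK : q ∈ K := interior_subset hqint
      have hqU : q ∈ U := hball₁ (by
        rw [Metric.mem_ball]
        exact lt_of_lt_of_le hqp (min_le_left _ _))
      have hφq : 0 < φ q := hφU q ⟨hqU, hqK⟩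
      have hφat : ContinuousAt φ q := hφcont.continuousAt (mem_interior_iff_mem_nhds.1 hqint)
      have h1 : {y : Eu d | φ q / 2 < φ y} ∈ nhds q :=
        hφat.eventually (eventually_gt_nhds (half_lt_self hφq))
      have h2 : interior K ∈ nhds q := isOpen_interior.mem_nhds hqint
      have h3 : Metric.ball p ε ∈ nhds q := Metric.isOpen_ball.mem_nhds (by
        rw [Metric.mem_ball]; exact hqp)
      obtain ⟨ε₃, hε₃, hb3⟩ := Metric.mem_nhds_iff.1 (Filter.inter_mem (Filter.inter_mem h1 h2) h3)
      set B : Set (Eu d) := Metric.ball q ε₃ with hBdef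
      have hBsub : B ⊆ K ∩ {y : Eu d | t ≤ ⟪y, u⟫ ∧ ⟪y, u⟫ < s} := by
        intro y hy
        obtain ⟨⟨hy1, hy2⟩, hy3⟩ := hb3 hy
        refine ⟨interior_subset hy2, ?_, ?_⟩
        · have hyp : ‖y - p‖ < ε := by
            rw [← dist_eq_norm]
            exact hy3
          have hib : |⟪y - p, u⟫| ≤ ‖y - p‖ := by
            have := abs_real_inner_le_norm (y - p) u
            rw [hu, mul_one] at this
            exact this
          have hdiff : ⟪y, u⟫ - r = ⟪y - p, u⟫ := by
            rw [inner_sub_left, hpr]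
          have hεrt : ε ≤ r - t := le_trans (min_le_right _ _) (min_le_left _ _)
          have := abs_le.1 hib
          linarith [this.1, this.2]
        · have hyp : ‖y - p‖ < ε := by
            rw [← dist_eq_norm]
            exact hy3
          have hib : |⟪y - p, u⟫| ≤ ‖y - p‖ := by
            have := abs_real_inner_le_norm (y - p) u
            rw [hu, mul_one] at this
            exact this
          have hdiff : ⟪y, u⟫ - r = ⟪y - p, u⟫ := by
            rw [inner_sub_left, hpr]
          have hεsr : ε ≤ s - r := le_trans (min_le_right _ _) (min_le_right _ _)
          have := abs_le.1 hib
          linarith [this.1, this.2]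
      have hμB : volume B ≠ ⊤ := ne_of_lt measure_ball_lt_top
      have hμBpos : 0 < (volume B).toReal := by
        refine ENNReal.toReal_pos (ne_of_gt (Metric.measure_ball_pos volume q hε₃)) hμB
      have hIB : IntegrableOn φ B := hIntK.mono_set (fun y hy => (hBsub hy).1)
      have hlowB : φ q / 2 * (volume B).toReal ≤ ∫ y in B, φ y :=
        setIntegral_ge_of_const_le_real measurableSet_ball hμB
          (fun y hy => le_of_lt (hb3 hy).1.1) hIB
      have hposB : 0 < ∫ y in B, φ y := lt_of_lt_of_le (by positivity) hlowB
      have hmonoB : (∫ y in B, φ y) ≤ ∫ y in K ∩ {y : Eu d | t ≤ ⟪y, u⟫ ∧ ⟪y, u⟫ < s}, φ y :=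
        setIntegral_mono_set (hIntOn _) (hφae _ (hSlabMeas u t s))
          (Filter.Eventually.of_forall hBsub)
      have hcapu : δ ≤ F u s := hcap u hu
      have hFts := hFadd u t s (le_of_lt hts)
      linarith
    · -- all of K lies above level s
      push_neg at hlow
      have hnegu : ‖-u‖ = 1 := by rw [norm_neg]; exact hu
      have hsubnull : K ∩ {y : Eu d | ⟪x, -u⟫ ≤ ⟪y, -u⟫} ⊆ {y : Eu d | ⟪y, u⟫ = s} := by
        rintro y ⟨hyK, hy⟩
        rw [Set.mem_setOf_eq, inner_neg_right, inner_neg_right, neg_le_neg_iff] at hy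
        exact le_antisymm hy (hlow y hyK)
      have hnull : volume (K ∩ {y : Eu d | ⟪x, -u⟫ ≤ ⟪y, -u⟫}) = 0 :=
        measure_mono_null hsubnull (hplane u s hu)
      have h0 : F (-u) ⟪x, -u⟫ = 0 := by
        show (∫ y in K ∩ {y : Eu d | ⟪x, -u⟫ ≤ ⟪y, -u⟫}, φ y) = 0
        rw [Measure.restrict_eq_zero.2 hnull]
        exact integral_zero_measure _
      have := hcap (-u) hnegu
      rw [h0] at this
      linarith
end

section
/- Let K ⊂ ℝ^d be a convex body that admits a rolling ball of radius r > 0 (i.e., every boundary point is contained in some Euclidean ball of radius r contained in K), let φ : K → (0,∞) be integrable with α := inf_K φ > 0, and let K_δ^φ denote the φ-weighted floating body. Then there exist δ₀ = δ₀(d,r,α) > 0 and C = C(d,r,α) > 0 such that for all δ ∈ (0,δ₀) and almost every unit vector u, the support functions satisfy 0 ≤ h_K(u) − h_{K_δ^φ}(u) ≤ C·δ^{2/(d+1)}. -/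
open MeasureTheory
open scoped RealInnerProductSpace

/-- The support function `h_K(u) = sup {x·u : x ∈ K}`. -/
noncomputable def suppFn {d : ℕ} (K : Set (EuclideanSpace ℝ (Fin d)))
    (u : EuclideanSpace ℝ (Fin d)) : ℝ :=
  sSup ((fun x => ⟪x, u⟫) '' K)

noncomputable def ellMap (d : ℕ) (v : EuclideanSpace ℝ (Fin d)) (a b : ℝ) :
    EuclideanSpace ℝ (Fin d) →ₗ[ℝ] EuclideanSpace ℝ (Fin d) :=
  b • LinearMap.id + (a - b) • ((LinearMap.toSpanSingleton ℝ _ v).comp (innerSL ℝ v).toLinearMap)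

lemma ellMap_apply {d : ℕ} (v : EuclideanSpace ℝ (Fin d)) (a b : ℝ) (x : EuclideanSpace ℝ (Fin d)) :
    ellMap d v a b x = b • x + (a - b) • ⟪v, x⟫ • v := by
  simp [ellMap, LinearMap.toSpanSingleton_apply, Finset.sum_smul]

lemma ellMap_det {d : ℕ} (hd : 1 ≤ d) (v : EuclideanSpace ℝ (Fin d)) (hv : ‖v‖ = 1)
    (a b : ℝ) : LinearMap.det (ellMap d v a b) = a * b ^ (d - 1) := by
  haveI : NeZero d := ⟨by omega⟩
  have hvv : ⟪v, v⟫ = 1 := by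
    rw [real_inner_self_eq_norm_sq, hv]; norm_num
  have horth : Orthonormal ℝ (Set.restrict {(0 : Fin d)} (fun _ => v)) := by
    constructor
    · intro i; exact hv
    · intro i j hij; exact absurd (Subsingleton.elim i j) hij
  obtain ⟨β, hβ⟩ := Orthonormal.exists_orthonormalBasis_extension_of_card_eq
    (𝕜 := ℝ) (by simp) horth
  have hβ0 : β 0 = v := hβ 0 rfl
  have hL : ∀ j, ellMap d v a b (β j) = (if j = 0 then a else b) • β j := by
    intro j
    rcases eq_or_ne j 0 with h | h
    · subst h; rw [ellMap_apply, hβ0, hvv, if_pos rfl]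
      module
    · rw [ellMap_apply]
      have h0 : ⟪v, β j⟫ = 0 := by
        rw [← hβ0]
        exact β.orthonormal.2 (Ne.symm h)
      simp [h0, h]
  have hM : LinearMap.toMatrix β.toBasis β.toBasis (ellMap d v a b)
      = Matrix.diagonal (fun j => if j = 0 then a else b) := by
    ext i j
    rw [LinearMap.toMatrix_apply]
    simp only [OrthonormalBasis.coe_toBasis, hL j, _root_.map_smul, Module.Basis.repr_self]
    rcases eq_or_ne i j with h | h
    · subst h
      split_ifs with h0 <;>
        simp [Matrix.diagonal_apply, h0, _root_.map_smul, OrthonormalBasis.repr_self,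
          EuclideanSpace.single_apply]
    · split_ifs <;>
        simp [Matrix.diagonal_apply, h, Ne.symm h, _root_.map_smul,
          OrthonormalBasis.repr_self, EuclideanSpace.single_apply]
  rw [← LinearMap.det_toMatrix β.toBasis, hM, Matrix.det_diagonal]
  rw [← Finset.mul_prod_erase Finset.univ _ (Finset.mem_univ 0), if_pos rfl]
  congr 1
  rw [Finset.prod_congr rfl (fun j hj => if_neg (Finset.ne_of_mem_erase hj)),
    Finset.prod_const, Finset.card_erase_of_mem (Finset.mem_univ 0), Finset.card_univ,
    Fintype.card_fin]

lemma ellipsoid_subset {d : ℕ} (v : EuclideanSpace ℝ (Fin d)) (hv : ‖v‖ = 1)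
    (r s : ℝ) (hs : 0 < s) (hsr : s ≤ r) (x : EuclideanSpace ℝ (Fin d)) (hx : ‖x‖ ≤ 1) :
    ‖(r - s/2) • v + ellMap d v (s/2) (Real.sqrt (r*s)/2) x‖ ≤ r ∧
      r - s ≤ ⟪(r - s/2) • v + ellMap d v (s/2) (Real.sqrt (r*s)/2) x, v⟫ := by
  have hr : 0 < r := lt_of_lt_of_le hs hsr
  set ξ := ⟪v, x⟫ with hξ
  set b := Real.sqrt (r*s)/2 with hb
  set w := x - ξ • v with hw
  have hvv : ⟪v, v⟫ = 1 := by rw [real_inner_self_eq_norm_sq, hv]; norm_num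
  have hvw : ⟪v, w⟫ = 0 := by
    rw [hw, inner_sub_right, real_inner_smul_right, hvv]; ring
  have hwv : ⟪w, v⟫ = 0 := by rw [real_inner_comm]; exact hvw
  have hy : (r - s/2) • v + ellMap d v (s/2) b x = (r - s/2 + (s/2)*ξ) • v + b • w := by
    rw [ellMap_apply, hw, ← hξ]; module
  have hξ1 : |ξ| ≤ 1 := by
    calc |ξ| ≤ ‖v‖ * ‖x‖ := abs_real_inner_le_norm v x
    _ ≤ 1 := by rw [hv]; simpa using hx
  have hw2 : ‖w‖^2 ≤ 1 - ξ^2 := by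
    have hxw : ‖x‖^2 = ξ^2 + ‖w‖^2 := by
      have hxd : x = ξ • v + w := by rw [hw]; module
      nth_rewrite 1 [hxd]
      rw [norm_add_sq_real, inner_smul_left, hvw, norm_smul, hv]
      simp [mul_pow, sq_abs]
    have hx2 : ‖x‖^2 ≤ 1 := by nlinarith [norm_nonneg x]
    nlinarith
  have hb2 : b^2 = r*s/4 := by
    rw [hb, div_pow, Real.sq_sqrt (by positivity)]; norm_num
  have hnorm2 : ‖(r - s/2 + (s/2)*ξ) • v + b • w‖^2 = (r - s/2 + (s/2)*ξ)^2 + b^2 * ‖w‖^2 := by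
    rw [norm_add_sq_real, inner_smul_left, inner_smul_right, hvw, norm_smul, norm_smul, hv]
    simp [mul_pow, sq_abs]
  have habs : -1 ≤ ξ ∧ ξ ≤ 1 := abs_le.mp hξ1
  have key : (r - s/2 + (s/2)*ξ)^2 + b^2 * ‖w‖^2 ≤ r^2 := by
    have h1 : 0 ≤ 1 - ξ := by linarith [habs.2]
    have h2 : 0 ≤ 3*r - s - (r-s)*ξ := by nlinarith [habs.1, habs.2]
    have hfac : r^2 - (r - s/2 + (s/2)*ξ)^2 - (r*s/4)*(1-ξ^2)
        = (s/4)*(1-ξ)*(3*r - s - (r-s)*ξ) := by ring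
    have hwterm : b^2 * ‖w‖^2 ≤ (r*s/4)*(1-ξ^2) := by
      rw [hb2]
      exact mul_le_mul_of_nonneg_left hw2 (by positivity)
    have hprod : 0 ≤ (s/4)*(1-ξ)*(3*r - s - (r-s)*ξ) :=
      mul_nonneg (mul_nonneg (by linarith) h1) h2
    linarith [hfac, hprod, hwterm]
  constructor
  · rw [hy]
    have h2 : ‖(r - s/2 + (s/2)*ξ) • v + b • w‖^2 ≤ r^2 := by rw [hnorm2]; exact key
    have h3 := Real.sqrt_le_sqrt h2
    rwa [Real.sqrt_sq (norm_nonneg _), Real.sqrt_sq hr.le] at h3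
  · rw [hy, inner_add_left, real_inner_smul_left, real_inner_smul_left, hvv, hwv]
    nlinarith [habs.1, hs.le]

lemma ellipsoid_volume {d : ℕ} (m v : EuclideanSpace ℝ (Fin d)) (a b : ℝ) :
    volume ((fun x => m + ellMap d v a b x) '' Metric.closedBall 0 1)
      = ENNReal.ofReal |LinearMap.det (ellMap d v a b)|
        * volume (Metric.closedBall (0:EuclideanSpace ℝ (Fin d)) 1) := by
  have h1 : (fun x => m + ellMap d v a b x) '' Metric.closedBall 0 1
      = (m + ·) '' (ellMap d v a b '' Metric.closedBall 0 1) := by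
    rw [Set.image_image]
  rw [h1, Set.image_add_left, measure_preimage_add,
    Measure.addHaar_image_linearMap]

lemma hyperplane_null {d : ℕ} (u : EuclideanSpace ℝ (Fin d)) (hu : ‖u‖ = 1) (h : ℝ) :
    volume {y : EuclideanSpace ℝ (Fin d) | ⟪y, u⟫ = h} = 0 := by
  have huu : ⟪u, u⟫ = 1 := by rw [real_inner_self_eq_norm_sq, hu]; norm_num
  set W := LinearMap.ker ((innerSL ℝ u).toLinearMap)
  have hWne : W ≠ ⊤ := by
    intro htop
    have : u ∈ W := htop ▸ Submodule.mem_top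
    rw [LinearMap.mem_ker] at this
    simp only [ContinuousLinearMap.coe_coe, innerSL_apply_apply] at this
    rw [huu] at this; norm_num at this
  have hW0 : volume (W : Set (EuclideanSpace ℝ (Fin d))) = 0 :=
    Measure.addHaar_submodule volume W hWne
  have hpre : (fun y => h • u + y) ⁻¹' {y : EuclideanSpace ℝ (Fin d) | ⟪y, u⟫ = h}
      = (W : Set (EuclideanSpace ℝ (Fin d))) := by
    ext y
    simp only [Set.mem_preimage, Set.mem_setOf_eq, W, SetLike.mem_coe, LinearMap.mem_ker,
      ContinuousLinearMap.coe_coe, innerSL_apply_apply]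
    rw [inner_add_left, real_inner_smul_left, huu, real_inner_comm y u]
    constructor
    · intro hy; linarith
    · intro hy; rw [hy]; ring
  calc volume {y : EuclideanSpace ℝ (Fin d) | ⟪y, u⟫ = h}
      = volume ((fun y => h • u + y) ⁻¹' {y : EuclideanSpace ℝ (Fin d) | ⟪y, u⟫ = h}) :=
        (measure_preimage_add volume _ _).symm
    _ = 0 := by rw [hpre]; exact hW0

lemma s_mul_sqrt_pow {s : ℝ} (hs : 0 < s) (n : ℕ) :
    s * Real.sqrt s ^ n = s ^ (((n:ℝ) + 2)/2) := by
  have h : ((n:ℝ) + 2)/2 = 1 + (1/2) * n := by ring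
  rw [h, Real.rpow_add hs, Real.rpow_one, Real.sqrt_eq_rpow,
    ← Real.rpow_natCast (s ^ ((1:ℝ)/2)) n, ← Real.rpow_mul hs.le]

/-- Uniform convergence rate for the weighted floating body of a body admitting a rolling
ball: there are `δ₀, C > 0` (depending on `d`, `r` and `α = inf_K φ`) such that for all
`δ ∈ (0,δ₀)` and almost every unit direction `u`,
`0 ≤ h_K(u) − h_{K_δ^φ}(u) ≤ C δ^{2/(d+1)}`. -/
theorem weightedFloatingBody_suppFn_rate (d : ℕ) (hd : 2 ≤ d)
    (K : Set (EuclideanSpace ℝ (Fin d))) (hKcomp : IsCompact K) (hKconv : Convex ℝ K)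
    (hKint : (interior K).Nonempty)
    (r : ℝ) (hr : 0 < r)
    (hroll : ∀ x ∈ frontier K, ∃ y, x ∈ Metric.closedBall y r ∧ Metric.closedBall y r ⊆ K)
    (φ : EuclideanSpace ℝ (Fin d) → ℝ) (hφint : IntegrableOn φ K)
    (hφpos : 0 < sInf (φ '' K)) :
    ∃ δ₀ > (0 : ℝ), ∃ C > (0 : ℝ), ∀ δ : ℝ, 0 < δ → δ < δ₀ →
      ∀ᵐ u ∂(μH[((d : ℝ) - 1)].restrict (Metric.sphere (0 : EuclideanSpace ℝ (Fin d)) 1)),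
        0 ≤ suppFn K u - suppFn (weightedFloatingBody K φ δ) u ∧
        suppFn K u - suppFn (weightedFloatingBody K φ δ) u ≤ C * δ ^ (2 / ((d : ℝ) + 1)) := by
  have hd1 : (1:ℕ) ≤ d := le_trans (by norm_num) hd
  have hdR : ((d:ℝ) + 1) ≠ 0 := by positivity
  have hKne : K.Nonempty := hKint.mono interior_subset
  have hbdd : BddBelow (φ '' K) := by
    by_contra h
    rw [Real.sInf_of_not_bddBelow h] at hφpos
    exact lt_irrefl _ hφpos
  set α := sInf (φ '' K) with hα
  have hαle : ∀ x ∈ K, α ≤ φ x := fun x hx => csInf_le hbdd ⟨x, hx, rfl⟩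
  set κ := (volume (Metric.closedBall (0:EuclideanSpace ℝ (Fin d)) 1)).toReal with hκdef
  have hκ : 0 < κ := by
    apply ENNReal.toReal_pos
    · exact (Metric.measure_closedBall_pos volume (0:EuclideanSpace ℝ (Fin d)) one_pos).ne'
    · exact (measure_closedBall_lt_top).ne
  set β := α * κ * (Real.sqrt r)^(d-1) / 2^d with hβdef
  have hβ : 0 < β := by
    have h1 : 0 < Real.sqrt r := Real.sqrt_pos.mpr hr
    positivity
  set C := (2/β) ^ (2/((d:ℝ)+1)) with hCdef
  have hC : 0 < C := Real.rpow_pos_of_pos (by positivity) _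
  set δ₀ := (r/C) ^ (((d:ℝ)+1)/2) with hδ₀def
  have hδ₀ : 0 < δ₀ := Real.rpow_pos_of_pos (by positivity) _
  refine ⟨δ₀, hδ₀, C, hC, ?_⟩
  intro δ hδ hδ0
  set e := 2/((d:ℝ)+1) with hedef
  have he : 0 < e := by positivity
  set s := C * δ ^ e with hsdef
  have hspos : 0 < s := mul_pos hC (Real.rpow_pos_of_pos hδ _)
  have hsr : s ≤ r := by
    have h1 : δ ^ e < δ₀ ^ e := Real.rpow_lt_rpow hδ.le hδ0 he
    have h2 : δ₀ ^ e = r / C := by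
      rw [hδ₀def, hedef, ← Real.rpow_mul (by positivity)]
      rw [show (((d:ℝ)+1)/2) * (2/((d:ℝ)+1)) = 1 by field_simp]
      exact Real.rpow_one _
    have := mul_lt_mul_of_pos_left (h2 ▸ h1) hC
    rw [mul_div_cancel₀ _ hC.ne'] at this
    exact le_of_lt this
  -- the key volume identity
  have hkey : α * ((s/2) * (Real.sqrt (r*s)/2)^(d-1)) * κ = 2 * δ := by
    have h2d : (2:ℝ)^d = 2 * 2^(d-1) := by
      rw [← pow_succ']
      congr 1
      omega
    have hsqrt : Real.sqrt (r*s) = Real.sqrt r * Real.sqrt s := Real.sqrt_mul hr.le s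
    have hsps : s ^ (((d:ℝ)+1)/2) = (2/β) * δ := by
      rw [hsdef, Real.mul_rpow hC.le (Real.rpow_nonneg hδ.le _), hCdef,
        ← Real.rpow_mul (by positivity), ← Real.rpow_mul hδ.le, hedef]
      rw [show (2/((d:ℝ)+1)) * (((d:ℝ)+1)/2) = 1 by field_simp]
      rw [Real.rpow_one, Real.rpow_one]
    have hss : s * (Real.sqrt s)^(d-1) = s ^ (((d:ℝ)+1)/2) := by
      rw [s_mul_sqrt_pow hspos (d-1)]
      congr 1
      have : ((d - 1 : ℕ) : ℝ) = (d:ℝ) - 1 := by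
        rw [Nat.cast_sub hd1]; norm_num
      rw [this]; ring
    calc α * ((s/2) * (Real.sqrt (r*s)/2)^(d-1)) * κ
        = α * κ * (Real.sqrt r)^(d-1) / 2^d * (s * (Real.sqrt s)^(d-1)) := by
          rw [hsqrt, h2d, div_pow, mul_pow]; ring
      _ = β * ((2/β) * δ) := by rw [← hβdef, hss, hsps]
      _ = 2 * δ := by field_simp
  -- pointwise statement for unit vectors
  filter_upwards [ae_restrict_mem Metric.isClosed_sphere.measurableSet] with u hu
  have hu1 : ‖u‖ = 1 := by simpa using hu
  have huu : ⟪u, u⟫ = 1 := by rw [real_inner_self_eq_norm_sq, hu1]; norm_num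
  have hcont : ∀ w : EuclideanSpace ℝ (Fin d),
      Continuous (fun y : EuclideanSpace ℝ (Fin d) => ⟪y, w⟫) :=
    fun w => continuous_id.inner continuous_const
  obtain ⟨x, hxK, hxmax⟩ := hKcomp.exists_isMaxOn hKne ((hcont u).continuousOn)
  have hbddK : ∀ y ∈ K, ⟪y, u⟫ ≤ ⟪x, u⟫ := fun y hy => hxmax hy
  have hsupp : suppFn K u = ⟪x, u⟫ := by
    apply IsGreatest.csSup_eq
    exact ⟨⟨x, hxK, rfl⟩, by rintro _ ⟨y, hy, rfl⟩; exact hbddK y hy⟩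
  have hxfr : x ∈ frontier K := by
    refine ⟨subset_closure hxK, ?_⟩
    intro hxint
    obtain ⟨ε, hε, hball⟩ := Metric.isOpen_iff.mp isOpen_interior x hxint
    have hmem : x + (ε/2) • u ∈ K := by
      apply interior_subset
      apply hball
      rw [Metric.mem_ball, dist_eq_norm]
      simp only [add_sub_cancel_left, norm_smul, hu1, mul_one]
      rw [Real.norm_eq_abs, abs_of_pos (by positivity)]
      linarith
    have hle := hbddK _ hmem
    rw [inner_add_left, real_inner_smul_left, huu] at hle
    linarith
  obtain ⟨c, hxc, hcK⟩ := hroll x hxfr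
  have hcu : ⟪x, u⟫ - r ≤ ⟪c, u⟫ := by
    have h1 : ‖x - c‖ ≤ r := by
      rw [← dist_eq_norm]; exact Metric.mem_closedBall.mp hxc
    have h2 : ⟪x - c, u⟫ ≤ r := by
      calc ⟪x - c, u⟫ ≤ ‖x - c‖ * ‖u‖ := real_inner_le_norm _ _
      _ ≤ r := by rw [hu1, mul_one]; exact h1
    rw [inner_sub_left] at h2; linarith
  set z := c + (r - s) • u with hzdef
  have hz_inner : ⟪x, u⟫ - s ≤ ⟪z, u⟫ := by
    rw [hzdef, inner_add_left, real_inner_smul_left, huu]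
    linarith
  have hzK : z ∈ K := by
    apply hcK
    rw [Metric.mem_closedBall, dist_eq_norm, hzdef]
    simp only [add_sub_cancel_left, norm_smul, hu1, mul_one]
    rw [Real.norm_eq_abs, abs_of_nonneg (by linarith)]
    linarith
  have hzF : z ∈ weightedFloatingBody K φ δ := by
    rw [weightedFloatingBody]
    simp only [Set.mem_iInter, Set.mem_setOf_eq]
    intro v hv1 t hIle
    by_contra hzt
    push_neg at hzt
    set m := c + (r - s/2) • v with hmdef
    have hzv : ⟪z, v⟫ ≤ ⟪c, v⟫ + (r - s) := by
      rw [hzdef, inner_add_left, real_inner_smul_left]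
      have huv : ⟪u, v⟫ ≤ 1 := by
        calc ⟪u, v⟫ ≤ ‖u‖ * ‖v‖ := real_inner_le_norm _ _
        _ = 1 := by rw [hu1, hv1, mul_one]
      nlinarith [sub_nonneg.mpr hsr]
    have hEsub : (fun x0 => m + ellMap d v (s/2) (Real.sqrt (r*s)/2) x0) '' Metric.closedBall 0 1
        ⊆ K ∩ {y | t ≤ ⟪y, v⟫} := by
      rintro _ ⟨x0, hx0, rfl⟩
      dsimp only
      have hx0n : ‖x0‖ ≤ 1 := mem_closedBall_zero_iff.mp hx0
      obtain ⟨hn, hi⟩ := ellipsoid_subset v hv1 r s hspos hsr x0 hx0n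
      have hrearr : m + ellMap d v (s/2) (Real.sqrt (r*s)/2) x0
          = c + ((r - s/2) • v + ellMap d v (s/2) (Real.sqrt (r*s)/2) x0) := by
        rw [hmdef, add_assoc]
      constructor
      · apply hcK
        rw [Metric.mem_closedBall, dist_eq_norm, hrearr]
        simpa using hn
      · show t ≤ ⟪m + ellMap d v (s/2) (Real.sqrt (r*s)/2) x0, v⟫
        rw [hrearr, inner_add_left]
        linarith [hi, hzt, hzv]
    have hmeas : MeasurableSet (K ∩ {y | t ≤ ⟪y, v⟫}) :=
      hKcomp.measurableSet.inter (measurableSet_le measurable_const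
        (hcont v).measurable)
    have hfin : volume (K ∩ {y | t ≤ ⟪y, v⟫}) ≠ ⊤ :=
      ((measure_mono Set.inter_subset_left).trans_lt hKcomp.measure_lt_top).ne
    have hIge : α * (volume (K ∩ {y | t ≤ ⟪y, v⟫})).toReal
        ≤ ∫ y in K ∩ {y | t ≤ ⟪y, v⟫}, φ y :=
      by have h := setIntegral_ge_of_const_le_real hmeas hfin (fun y hy => hαle y hy.1)
          (hφint.mono_set Set.inter_subset_left)
         exact h
    have hdet : |LinearMap.det (ellMap d v (s/2) (Real.sqrt (r*s)/2))|
        = (s/2) * (Real.sqrt (r*s)/2)^(d-1) := by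
      rw [ellMap_det hd1 v hv1, abs_of_nonneg (by positivity)]
    have hvolE := ellipsoid_volume m v (s/2) (Real.sqrt (r*s)/2)
    rw [hdet] at hvolE
    have htoReal : (s/2) * (Real.sqrt (r*s)/2)^(d-1) * κ
        ≤ (volume (K ∩ {y | t ≤ ⟪y, v⟫})).toReal := by
      have h1 := measure_mono (μ := volume) hEsub
      rw [hvolE] at h1
      calc (s/2) * (Real.sqrt (r*s)/2)^(d-1) * κ
          = (ENNReal.ofReal ((s/2) * (Real.sqrt (r*s)/2)^(d-1))
              * volume (Metric.closedBall (0:EuclideanSpace ℝ (Fin d)) 1)).toReal := by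
            rw [ENNReal.toReal_mul, ENNReal.toReal_ofReal (by positivity), hκdef]
        _ ≤ _ := ENNReal.toReal_mono hfin h1
    have hcontr : 2 * δ ≤ ∫ y in K ∩ {y | t ≤ ⟪y, v⟫}, φ y := by
      rw [← hkey]
      calc α * ((s/2) * (Real.sqrt (r*s)/2)^(d-1)) * κ
          = α * ((s/2) * (Real.sqrt (r*s)/2)^(d-1) * κ) := by ring
        _ ≤ α * (volume (K ∩ {y | t ≤ ⟪y, v⟫})).toReal :=
            mul_le_mul_of_nonneg_left htoReal (le_of_lt hφpos)
        _ ≤ _ := hIge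
    linarith [hIle, hδ]
  have hKδle : ∀ y ∈ weightedFloatingBody K φ δ, ⟪y, u⟫ ≤ suppFn K u := by
    intro y hy
    have hnull : volume (K ∩ {y | suppFn K u ≤ ⟪y, u⟫}) = 0 := by
      apply measure_mono_null _ (hyperplane_null u hu1 (suppFn K u))
      rintro y0 ⟨hy0K, hy0⟩
      exact le_antisymm (hsupp ▸ hbddK y0 hy0K) hy0
    have hIz : ∫ y in K ∩ {y | suppFn K u ≤ ⟪y, u⟫}, φ y ≤ δ := by
      have h0 : volume.restrict (K ∩ {y | suppFn K u ≤ ⟪y, u⟫}) = 0 :=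
        Measure.restrict_eq_zero.mpr hnull
      rw [h0, integral_zero_measure]
      exact hδ.le
    rw [weightedFloatingBody] at hy
    simp only [Set.mem_iInter, Set.mem_setOf_eq] at hy
    exact hy u hu1 (suppFn K u) hIz
  have hbddA : BddAbove ((fun y => ⟪y, u⟫) '' weightedFloatingBody K φ δ) := by
    refine ⟨suppFn K u, ?_⟩
    rintro _ ⟨y, hy, rfl⟩
    exact hKδle y hy
  have hFle : suppFn (weightedFloatingBody K φ δ) u ≤ suppFn K u :=
    csSup_le ⟨_, ⟨z, hzF, rfl⟩⟩ (by rintro _ ⟨y, hy, rfl⟩; exact hKδle y hy)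
  have hFge : ⟪z, u⟫ ≤ suppFn (weightedFloatingBody K φ δ) u :=
    le_csSup hbddA ⟨z, hzF, rfl⟩
  refine ⟨by linarith, ?_⟩
  have hfinal : suppFn K u - s ≤ suppFn (weightedFloatingBody K φ δ) u := by
    rw [hsupp]; linarith [hz_inner, hFge]
  linarith [hfinal, hsdef.le, hsdef.ge]
end

section
/- Let K ⊂ ℍ^d be a hyperbolic convex body (in the hyperboloid model in ℝ^{d,1}) and let K* = {v ∈ dS₁^d : u∘v ≤ 0 for all u ∈ K} be its hyperbolic dual. Then (K*)* = K, where for a subset L ⊂ dS₁^d we set L* = {u ∈ ℍ^d : u∘v ≤ 0 for all v ∈ L}. -/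
open scoped BigOperators

set_option maxHeartbeats 1000000

/-- The Lorentz–Minkowski bilinear form on `ℝ^{d,1} = ℝ^{d+1}`. -/
def lorentzInner {d : ℕ} (v w : Fin (d + 1) → ℝ) : ℝ :=
  (∑ i : Fin d, v i.castSucc * w i.castSucc) - v (Fin.last d) * w (Fin.last d)

/-- The hyperboloid model `ℍ^d = {u : u∘u = −1, u_{d+1} > 0}`. -/
def hyperboloid (d : ℕ) : Set (Fin (d + 1) → ℝ) :=
  {u | lorentzInner u u = -1 ∧ 0 < u (Fin.last d)}

/-- The de Sitter space `dS₁^d = {v : v∘v = 1}`. -/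
def deSitter (d : ℕ) : Set (Fin (d + 1) → ℝ) :=
  {v | lorentzInner v v = 1}

/-- The radial extension `rad K = {ru : r ≥ 0, u ∈ K}`. -/
def radExt {d : ℕ} (K : Set (Fin (d + 1) → ℝ)) : Set (Fin (d + 1) → ℝ) :=
  {x | ∃ r : ℝ, 0 ≤ r ∧ ∃ u ∈ K, x = r • u}

/-- A hyperbolic convex body. -/
def IsHypConvexBody {d : ℕ} (K : Set (Fin (d + 1) → ℝ)) : Prop :=
  K ⊆ hyperboloid d ∧ IsCompact K ∧ Convex ℝ (radExt K) ∧ (interior (radExt K)).Nonempty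

/-- The hyperbolic dual `K* ⊂ dS₁^d` of a set `K ⊂ ℍ^d`. -/
def hypDual {d : ℕ} (K : Set (Fin (d + 1) → ℝ)) : Set (Fin (d + 1) → ℝ) :=
  {v ∈ deSitter d | ∀ u ∈ K, lorentzInner u v ≤ 0}

/-- The dual `L* ⊂ ℍ^d` of a set `L ⊂ dS₁^d`. -/
def deSitterDual {d : ℕ} (L : Set (Fin (d + 1) → ℝ)) : Set (Fin (d + 1) → ℝ) :=
  {u ∈ hyperboloid d | ∀ v ∈ L, lorentzInner u v ≤ 0}

lemma lorentzInner_comm {d : ℕ} (v w : Fin (d + 1) → ℝ) :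
    lorentzInner v w = lorentzInner w v := by
  simp [lorentzInner, mul_comm]

lemma lorentzInner_smul_left {d : ℕ} (c : ℝ) (v w : Fin (d + 1) → ℝ) :
    lorentzInner (c • v) w = c * lorentzInner v w := by
  simp only [lorentzInner, Pi.smul_apply, smul_eq_mul, mul_assoc, ← Finset.mul_sum]
  ring

lemma lorentzInner_smul_right {d : ℕ} (c : ℝ) (v w : Fin (d + 1) → ℝ) :
    lorentzInner v (c • w) = c * lorentzInner v w := by
  rw [lorentzInner_comm, lorentzInner_smul_left, lorentzInner_comm]

lemma cs_aux {d : ℕ} (f g : Fin d → ℝ) :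
    |∑ i : Fin d, f i * g i| ≤
      Real.sqrt (∑ i : Fin d, f i ^ 2) * Real.sqrt (∑ i : Fin d, g i ^ 2) := by
  rw [← Real.sqrt_mul (Finset.sum_nonneg fun i _ => sq_nonneg _), ← Real.sqrt_sq_eq_abs]
  exact Real.sqrt_le_sqrt (Finset.sum_mul_sq_le_sq_mul_sq _ _ _)

/-- If a vector has positive Lorentz product with one point of `ℍ^d` and nonpositive
Lorentz product with another, it must be spacelike. -/
lemma spacelike {d : ℕ} (v u w : Fin (d + 1) → ℝ) (hu : u ∈ hyperboloid d)
    (hw : w ∈ hyperboloid d) (h1 : 0 < lorentzInner u v) (h2 : lorentzInner w v ≤ 0) :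
    0 < lorentzInner v v := by
  by_contra h
  push_neg at h
  set a := v (Fin.last d) with ha
  set S := ∑ i : Fin d, (v i.castSucc) ^ 2 with hS
  set Su := ∑ i : Fin d, (u i.castSucc) ^ 2 with hSu
  set Sw := ∑ i : Fin d, (w i.castSucc) ^ 2 with hSw
  have hS0 : 0 ≤ S := Finset.sum_nonneg fun i _ => sq_nonneg _
  have hSu0 : 0 ≤ Su := Finset.sum_nonneg fun i _ => sq_nonneg _
  have hSw0 : 0 ≤ Sw := Finset.sum_nonneg fun i _ => sq_nonneg _
  have hsq : ∀ x : Fin (d+1) → ℝ, ∑ i : Fin d, x i.castSucc * x i.castSucc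
      = ∑ i : Fin d, (x i.castSucc) ^ 2 := by
    intro x; exact Finset.sum_congr rfl fun i _ => (pow_two _).symm
  have hSa : S ≤ a ^ 2 := by
    have h' := h
    simp only [lorentzInner] at h'
    rw [hsq v] at h'
    nlinarith [h']
  have hut : u (Fin.last d) ^ 2 = Su + 1 := by
    have h' := hu.1
    simp only [lorentzInner] at h'
    rw [hsq u] at h'
    nlinarith [h']
  have hwt : w (Fin.last d) ^ 2 = Sw + 1 := by
    have h' := hw.1
    simp only [lorentzInner] at h'
    rw [hsq w] at h'
    nlinarith [h']
  have hut0 : 0 < u (Fin.last d) := hu.2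
  have hwt0 : 0 < w (Fin.last d) := hw.2
  have hcsu := cs_aux (fun i => u i.castSucc) (fun i => v i.castSucc)
  have hcsw := cs_aux (fun i => w i.castSucc) (fun i => v i.castSucc)
  set P := ∑ i : Fin d, u i.castSucc * v i.castSucc with hP
  set Q := ∑ i : Fin d, w i.castSucc * v i.castSucc with hQ
  have h1' : u (Fin.last d) * a < P := by
    have := h1; simp only [lorentzInner] at this; linarith
  have h2' : Q ≤ w (Fin.last d) * a := by
    have := h2; simp only [lorentzInner] at this; linarith
  have hsS : Real.sqrt S ≤ |a| := by
    rw [← Real.sqrt_sq_eq_abs]; exact Real.sqrt_le_sqrt hSa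
  have hsSu : Real.sqrt Su < u (Fin.last d) := by
    have : Real.sqrt Su < Real.sqrt (Su + 1) := Real.sqrt_lt_sqrt hSu0 (by linarith)
    calc Real.sqrt Su < Real.sqrt (Su + 1) := this
      _ = u (Fin.last d) := by rw [← hut, Real.sqrt_sq hut0.le]
  have hsSw : Real.sqrt Sw < w (Fin.last d) := by
    have : Real.sqrt Sw < Real.sqrt (Sw + 1) := Real.sqrt_lt_sqrt hSw0 (by linarith)
    calc Real.sqrt Sw < Real.sqrt (Sw + 1) := this
      _ = w (Fin.last d) := by rw [← hwt, Real.sqrt_sq hwt0.le]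
  have hsSu0 : 0 ≤ Real.sqrt Su := Real.sqrt_nonneg _
  have hsSw0 : 0 ≤ Real.sqrt Sw := Real.sqrt_nonneg _
  have hPle : P ≤ Real.sqrt Su * |a| :=
    le_trans (le_abs_self P) (le_trans hcsu (by nlinarith [Real.sqrt_nonneg Su]))
  have haneg : a < 0 := by
    by_contra hge
    push_neg at hge
    have : |a| = a := abs_of_nonneg hge
    nlinarith [hPle, h1', hsSu]
  have hQge : -(Real.sqrt Sw * |a|) ≤ Q := by
    have := neg_abs_le Q
    nlinarith [hcsw, hsS, hsSw0]
  have : |a| = -a := abs_of_neg haneg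
  nlinarith [h2', hQge, hsSw, haneg]

lemma hyperboloid_last_pos {d : ℕ} {u : Fin (d + 1) → ℝ} (hu : u ∈ hyperboloid d) :
    1 ≤ u (Fin.last d) := by
  have h := hu.1
  simp only [lorentzInner] at h
  have hS : 0 ≤ ∑ i : Fin d, u i.castSucc * u i.castSucc :=
    Finset.sum_nonneg fun i _ => mul_self_nonneg _
  nlinarith [hu.2]

lemma radExt_isClosed {d : ℕ} {K : Set (Fin (d + 1) → ℝ)} (hKH : K ⊆ hyperboloid d)
    (hKc : IsCompact K) : IsClosed (radExt K) := by
  apply IsSeqClosed.isClosed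
  intro x p hx hp
  choose r hr u hu hxe using hx
  obtain ⟨w, hwK, φ, hφ, hφt⟩ := hKc.tendsto_subseq hu
  have hwlast : (1:ℝ) ≤ w (Fin.last d) := hyperboloid_last_pos (hKH hwK)
  have hxφ : Filter.Tendsto (fun n => x (φ n)) Filter.atTop (nhds p) :=
    hp.comp hφ.tendsto_atTop
  have hxlast : Filter.Tendsto (fun n => x (φ n) (Fin.last d)) Filter.atTop
      (nhds (p (Fin.last d))) := by
    exact (continuous_apply (Fin.last d)).continuousAt.tendsto.comp hxφ
  have hulast : Filter.Tendsto (fun n => u (φ n) (Fin.last d)) Filter.atTop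
      (nhds (w (Fin.last d))) :=
    (continuous_apply (Fin.last d)).continuousAt.tendsto.comp hφt
  have hune : ∀ n, u (φ n) (Fin.last d) ≠ 0 := fun n =>
    (lt_of_lt_of_le one_pos (hyperboloid_last_pos (hKH (hu (φ n))))).ne'
  have hwne : w (Fin.last d) ≠ 0 := (lt_of_lt_of_le one_pos hwlast).ne'
  have hrq : ∀ n, r (φ n) = x (φ n) (Fin.last d) / u (φ n) (Fin.last d) := by
    intro n
    rw [hxe (φ n)]
    simp only [Pi.smul_apply, smul_eq_mul]
    rw [mul_div_assoc, div_self (hune n), mul_one]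
  have hrt : Filter.Tendsto (fun n => r (φ n)) Filter.atTop
      (nhds (p (Fin.last d) / w (Fin.last d))) := by
    simp only [hrq]
    exact hxlast.div hulast hwne
  set r0 := p (Fin.last d) / w (Fin.last d) with hr0
  have hrnn : 0 ≤ r0 := ge_of_tendsto hrt (Filter.Eventually.of_forall fun n => hr (φ n))
  refine ⟨r0, hrnn, w, hwK, ?_⟩
  have hlim : Filter.Tendsto (fun n => r (φ n) • u (φ n)) Filter.atTop (nhds (r0 • w)) :=
    hrt.smul hφt
  have : Filter.Tendsto (fun n => x (φ n)) Filter.atTop (nhds (r0 • w)) := by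
    simpa only [← hxe] using hlim
  exact tendsto_nhds_unique hxφ this

/-- Hyperbolic duality is an involution on hyperbolic convex bodies: `(K*)* = K`. -/
theorem hypDual_involutive (d : ℕ) (hd : 2 ≤ d)
    (K : Set (Fin (d + 1) → ℝ)) (hK : IsHypConvexBody K) :
    deSitterDual (hypDual K) = K := by
  obtain ⟨hKH, hKc, hKconv, hKint⟩ := hK
  have hKne : K.Nonempty := by
    rcases Set.eq_empty_or_nonempty K with hE | hNE
    · exfalso
      have : radExt K = (∅ : Set (Fin (d + 1) → ℝ)) := by
        ext x; simp [radExt, hE]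
      rw [this] at hKint
      simp at hKint
    · exact hNE
  obtain ⟨w0, hw0⟩ := hKne
  apply Set.Subset.antisymm
  · intro u hu
    obtain ⟨huH, hudual⟩ := hu
    by_contra huK
    have hC : IsClosed (radExt K) := radExt_isClosed hKH hKc
    have huC : u ∉ radExt K := by
      rintro ⟨r, hrnn, w, hwK, rfl⟩
      have h1 : lorentzInner (r • w) (r • w) = -1 := huH.1
      rw [lorentzInner_smul_left, lorentzInner_smul_right, (hKH hwK).1] at h1
      have hr1 : r = 1 := by nlinarith
      rw [hr1, one_smul] at huK
      exact huK hwK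
    obtain ⟨f, c, hfa, hfc⟩ := geometric_hahn_banach_closed_point hKconv hC huC
    have hc0 : (0:ℝ) < c := by
      have h0 : (0 : Fin (d + 1) → ℝ) ∈ radExt K :=
        ⟨0, le_refl 0, w0, hw0, by simp⟩
      have := hfa 0 h0
      simpa using this
    have hneg : ∀ w ∈ K, f w ≤ 0 := by
      intro w hw
      by_contra hpos
      push_neg at hpos
      have hmem : (c / f w) • w ∈ radExt K :=
        ⟨c / f w, le_of_lt (div_pos hc0 hpos), w, hw, rfl⟩
      have := hfa _ hmem
      rw [map_smul, smul_eq_mul, div_mul_cancel₀ c hpos.ne'] at this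
      exact lt_irrefl c this
    -- Build the separating vector in coordinates
    set y : Fin (d + 1) → ℝ := fun i => f (fun j => if i = j then 1 else 0) with hy
    set v' : Fin (d + 1) → ℝ := fun i => if i = Fin.last d then -y i else y i with hv'
    have hfw : ∀ w : Fin (d + 1) → ℝ, lorentzInner w v' = f w := by
      intro w
      have hsum := LinearMap.pi_apply_eq_sum_univ
        (f.toLinearMap : (Fin (d + 1) → ℝ) →ₗ[ℝ] ℝ) w
      simp only [ContinuousLinearMap.coe_coe, smul_eq_mul] at hsum
      rw [lorentzInner, hsum, Fin.sum_univ_castSucc (f := fun i => w i * y i)]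
      have hcs : ∀ i : Fin d, v' i.castSucc = y i.castSucc := by
        intro i
        simp only [hv']
        rw [if_neg (Fin.castSucc_lt_last i).ne]
      have hlast : v' (Fin.last d) = -y (Fin.last d) := by
        simp [hv']
      rw [hlast]
      have : ∑ i : Fin d, w i.castSucc * v' i.castSucc
          = ∑ i : Fin d, w i.castSucc * y i.castSucc :=
        Finset.sum_congr rfl fun i _ => by rw [hcs i]
      rw [this]
      ring
    have hfu : 0 < lorentzInner u v' := by rw [hfw]; linarith
    have hfw0 : lorentzInner w0 v' ≤ 0 := by rw [hfw]; exact hneg w0 hw0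
    have hq : 0 < lorentzInner v' v' :=
      spacelike v' u w0 huH (hKH hw0) hfu hfw0
    set q := lorentzInner v' v' with hqdef
    set cn := (Real.sqrt q)⁻¹ with hcn
    have hsq0 : 0 < Real.sqrt q := Real.sqrt_pos.mpr hq
    have hcn0 : 0 < cn := inv_pos.mpr hsq0
    set v := cn • v' with hv
    have hvds : v ∈ deSitter d := by
      show lorentzInner v v = 1
      rw [hv, lorentzInner_smul_left, lorentzInner_smul_right, ← hqdef]
      rw [hcn]
      rw [← Real.sqrt_mul_self hq.le]
      field_simp
      rw [Real.sq_sqrt (Real.sqrt_nonneg _)]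
    have hvdual : v ∈ hypDual K := by
      refine ⟨hvds, fun w hw => ?_⟩
      rw [hv, lorentzInner_smul_right, hfw]
      exact mul_nonpos_of_nonneg_of_nonpos hcn0.le (hneg w hw)
    have hle := hudual v hvdual
    rw [hv, lorentzInner_smul_right] at hle
    nlinarith [hle, hfu, hcn0]
  · intro w hw
    exact ⟨hKH hw, fun v hv => hv.2 w hw⟩
end
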